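/- arXiv:1409.3974 — 6 statements merged into one kernel-verified Lean document; each statement's English description precedes it below -/
import Mathlib

section
/- Let R be a ring and let f(x) ∈ R[[x]] be a formal power series. If the constant term f(0) ∈ R is optimally J-clean, then f(x) is strongly J-clean in R[[x]]. -/
universe u

/-- An element is strongly J-clean if it is the sum of an idempotent and an element
of the Jacobson radical that commute with each other. -/
def IsStronglyJClean {R : Type u} [Ring R] (a : R) : Prop :=
  ∃ e : R, IsIdempotentElem e ∧ a - e ∈ (⊥ : Ideal R).jacobson ∧ a * e = e * a

/-- An element `a` is optimally J-clean if there is an idempotent `e` with `a - e ∈ J(R)`,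
`ae = ea`, and for every `b` there exists `c` with `ac - ca = eb - be`. -/
def IsOptimallyJClean {R : Type u} [Ring R] (a : R) : Prop :=
  ∃ e : R, IsIdempotentElem e ∧ a - e ∈ (⊥ : Ideal R).jacobson ∧ a * e = e * a ∧
    ∀ b : R, ∃ c : R, a * c - c * a = e * b - b * e

section Auxiliary

variable {R : Type u} [Ring R]

theorem exists_left_inv_one_add {w : R} (hw : w ∈ (⊥ : Ideal R).jacobson) :
    ∃ z : R, z * (1 + w) = 1 := by
  obtain ⟨z, hz⟩ := Ideal.mem_jacobson_iff.1 hw 1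
  rw [Ideal.mem_bot] at hz
  refine ⟨z, ?_⟩
  rw [mul_one] at hz
  rw [mul_add, mul_one]
  linear_combination (norm := noncomm_ring) hz

theorem isUnit_one_add_of_mem_jacobson {w : R} (hw : w ∈ (⊥ : Ideal R).jacobson) :
    IsUnit (1 + w) := by
  obtain ⟨z, hz⟩ := exists_left_inv_one_add hw
  have hz1 : z - 1 ∈ (⊥ : Ideal R).jacobson := by
    have h2 : z - 1 = -(z * w) := by
      have h3 := hz
      rw [mul_add, mul_one] at h3
      linear_combination (norm := noncomm_ring) h3
    rw [h2]
    exact neg_mem (Ideal.mul_mem_left _ z hw)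
  obtain ⟨u, hu⟩ := exists_left_inv_one_add hz1
  rw [add_sub_cancel] at hu
  have huw : u = 1 + w := by
    calc u = u * (z * (1 + w)) := by rw [hz, mul_one]
    _ = (u * z) * (1 + w) := by rw [mul_assoc]
    _ = 1 + w := by rw [hu, one_mul]
  exact ⟨⟨1 + w, z, by rw [← huw]; exact hu, hz⟩, rfl⟩

theorem mem_jacobson_powerSeries {g : PowerSeries R}
    (hg : PowerSeries.constantCoeff g ∈ (⊥ : Ideal R).jacobson) :
    g ∈ (⊥ : Ideal (PowerSeries R)).jacobson := by
  rw [Ideal.mem_jacobson_iff]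
  intro y
  have hu : IsUnit (1 + y * g) := by
    rw [PowerSeries.isUnit_iff_constantCoeff, map_add, map_mul, map_one]
    exact isUnit_one_add_of_mem_jacobson (Ideal.mul_mem_left _ _ hg)
  obtain ⟨u, hu⟩ := hu
  refine ⟨↑u⁻¹, ?_⟩
  rw [Ideal.mem_bot]
  have h1 : (↑u⁻¹ : PowerSeries R) * (1 + y * g) = 1 := by rw [← hu]; exact u.inv_mul
  rw [mul_add, mul_one, ← mul_assoc] at h1
  linear_combination (norm := noncomm_ring) h1

theorem idem_comm_aux {e : R} (he : e * e = e) (t : R) :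
    e * (t + (e * (t * e - e * t) - (t * e - e * t) * e)) =
      (t + (e * (t * e - e * t) - (t * e - e * t) * e)) * e := by
  have hre : ∀ x : R, x * e * e = x * e := fun x => by rw [mul_assoc, he]
  simp only [mul_sub, sub_mul, mul_add, add_mul, ← mul_assoc, he, hre]
  abel

noncomputable def zgAux (a e : R) (fc : ℕ → R) (cc : R → R) : ℕ → R × R
  | 0 => (0, a)
  | (n + 1) =>
    let T : R := fc (n + 1) + ∑ i ∈ (Finset.range n).attach,
      (fc (n - i.1) * (zgAux a e fc cc (i.1 + 1)).1
        - (zgAux a e fc cc (i.1 + 1)).1 * (zgAux a e fc cc (n - i.1)).2)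
    (cc (T * e - e * T), T + (a * cc (T * e - e * T) - cc (T * e - e * T) * a))
  decreasing_by
  all_goals first
    | exact Nat.succ_lt_succ (Finset.mem_range.mp i.2)
    | exact Nat.lt_succ_of_le (Nat.sub_le n i.1)

noncomputable def TAux (a e : R) (fc : ℕ → R) (cc : R → R) (n : ℕ) : R :=
  fc (n + 1) + ∑ i ∈ (Finset.range n).attach,
      (fc (n - i.1) * (zgAux a e fc cc (i.1 + 1)).1
        - (zgAux a e fc cc (i.1 + 1)).1 * (zgAux a e fc cc (n - i.1)).2)

theorem zgAux_zero (a e : R) (fc : ℕ → R) (cc : R → R) :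
    zgAux a e fc cc 0 = (0, a) := by rw [zgAux]

theorem zgAux_succ (a e : R) (fc : ℕ → R) (cc : R → R) (n : ℕ) :
    zgAux a e fc cc (n + 1) =
      (cc (TAux a e fc cc n * e - e * TAux a e fc cc n),
        TAux a e fc cc n + (a * cc (TAux a e fc cc n * e - e * TAux a e fc cc n)
          - cc (TAux a e fc cc n * e - e * TAux a e fc cc n) * a)) := by
  rw [zgAux]; rfl

theorem zg_comm {a e : R} {fc : ℕ → R} {cc : R → R} (he : e * e = e) (hea : a * e = e * a)
    (hcc : ∀ b, a * cc b - cc b * a = e * b - b * e) (n : ℕ) :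
    e * (zgAux a e fc cc n).2 = (zgAux a e fc cc n).2 * e := by
  cases n with
  | zero => rw [zgAux_zero]; exact hea.symm
  | succ n =>
    rw [zgAux_succ]
    dsimp only
    rw [hcc (TAux a e fc cc n * e - e * TAux a e fc cc n)]
    exact idem_comm_aux he (TAux a e fc cc n)

theorem zg_rec {a e : R} {fc : ℕ → R} {cc : R → R} (hfc0 : fc 0 = a) (n : ℕ) :
    (zgAux a e fc cc n).2
        + ∑ k ∈ Finset.range (n + 1), (zgAux a e fc cc k).1 * (zgAux a e fc cc (n - k)).2
      = fc n + ∑ k ∈ Finset.range (n + 1), fc k * (zgAux a e fc cc (n - k)).1 := by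
  cases n with
  | zero => simp [zgAux_zero, hfc0]
  | succ n =>
    have srs : ∀ F : ℕ → R, ∑ k ∈ Finset.range (n + 2), F k
        = (∑ i ∈ Finset.range n, F (i + 1)) + F (n + 1) + F 0 := fun F => by
      rw [Finset.sum_range_succ', Finset.sum_range_succ]
    rw [srs, srs]
    simp only [Nat.succ_sub_succ, Nat.sub_self, Nat.sub_zero, zgAux_zero, zero_mul, mul_zero,
      add_zero, hfc0]
    rw [zgAux_succ]
    dsimp only
    rw [TAux]
    rw [Finset.sum_attach (Finset.range n) (fun i =>
      fc (n - i) * (zgAux a e fc cc (i + 1)).1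
        - (zgAux a e fc cc (i + 1)).1 * (zgAux a e fc cc (n - i)).2)]
    rw [Finset.sum_sub_distrib]
    have hrefl : ∑ i ∈ Finset.range n, fc (i + 1) * (zgAux a e fc cc (n - i)).1
        = ∑ i ∈ Finset.range n, fc (n - i) * (zgAux a e fc cc (i + 1)).1 := by
      rw [← Finset.sum_range_reflect]
      apply Finset.sum_congr rfl
      intro j hj
      have hj' := Finset.mem_range.mp hj
      have h1 : n - 1 - j + 1 = n - j := by omega
      have h2 : n - (n - 1 - j) = j + 1 := by omega
      rw [h1, h2]
    rw [hrefl]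
    abel

end Auxiliary

theorem stronglyJClean_powerSeries_of_optimallyJClean_constantCoeff {R : Type u} [Ring R]
    (f : PowerSeries R) (h : IsOptimallyJClean (PowerSeries.constantCoeff f)) :
    IsStronglyJClean f := by
  classical
  obtain ⟨e, he, hJ, hea, hopt⟩ := h
  set a : R := PowerSeries.constantCoeff f with ha
  set cc : R → R := fun b => Classical.choose (hopt b) with hccdef
  have hcc : ∀ b, a * cc b - cc b * a = e * b - b * e := fun b => Classical.choose_spec (hopt b)
  set fc : ℕ → R := fun n => PowerSeries.coeff n f with hfcdef
  have hfc0 : fc 0 = a := PowerSeries.coeff_zero_eq_constantCoeff_apply f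
  set Z : PowerSeries R := PowerSeries.mk fun n => (zgAux a e fc cc n).1 with hZdef
  set G : PowerSeries R := PowerSeries.mk fun n => (zgAux a e fc cc n).2 with hGdef
  have he' : e * e = e := he
  have hkey : (1 + Z) * G = f * (1 + Z) := by
    ext n
    rw [add_mul, one_mul, mul_add, mul_one, map_add, map_add,
      PowerSeries.coeff_mul, PowerSeries.coeff_mul,
      Finset.Nat.sum_antidiagonal_eq_sum_range_succ_mk,
      Finset.Nat.sum_antidiagonal_eq_sum_range_succ_mk]
    simp only [hZdef, hGdef, PowerSeries.coeff_mk]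
    exact zg_rec hfc0 n
  have hCeG : (PowerSeries.C e) * G = G * (PowerSeries.C e) := by
    ext n
    rw [PowerSeries.coeff_C_mul, PowerSeries.coeff_mul_C]
    simp only [hGdef, PowerSeries.coeff_mk]
    exact zg_comm he' hea hcc n
  have hZ0 : PowerSeries.constantCoeff Z = 0 := by
    rw [hZdef, PowerSeries.constantCoeff_mk, zgAux_zero]
  have hu : IsUnit (1 + Z) := by
    rw [PowerSeries.isUnit_iff_constantCoeff, map_add, map_one, hZ0, add_zero]
    exact isUnit_one
  obtain ⟨U, hU⟩ := hu
  set W : PowerSeries R := ↑U⁻¹ with hWdef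
  have hW1 : (1 + Z) * W = 1 := by rw [← hU]; exact U.mul_inv
  have hW2 : W * (1 + Z) = 1 := by rw [← hU]; exact U.inv_mul
  have hCe2 : PowerSeries.C e * PowerSeries.C e = PowerSeries.C e := by
    rw [← map_mul, he']
  refine ⟨(1 + Z) * PowerSeries.C e * W, ?_, ?_, ?_⟩
  · show ((1 + Z) * PowerSeries.C e * W) * ((1 + Z) * PowerSeries.C e * W)
      = (1 + Z) * PowerSeries.C e * W
    calc ((1 + Z) * PowerSeries.C e * W) * ((1 + Z) * PowerSeries.C e * W)
        = (1 + Z) * (PowerSeries.C e * ((W * (1 + Z)) * (PowerSeries.C e * W))) := by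
          simp only [mul_assoc]
      _ = (1 + Z) * (PowerSeries.C e * (PowerSeries.C e * W)) := by rw [hW2, one_mul]
      _ = (1 + Z) * ((PowerSeries.C e * PowerSeries.C e) * W) := by rw [mul_assoc]
      _ = (1 + Z) * (PowerSeries.C e * W) := by rw [hCe2]
      _ = (1 + Z) * PowerSeries.C e * W := by rw [mul_assoc]
  · apply mem_jacobson_powerSeries
    have hWc : PowerSeries.constantCoeff W = 1 := by
      have h2 := congrArg (PowerSeries.constantCoeff) hW1
      rwa [map_mul, map_add, map_one, hZ0, add_zero, one_mul] at h2
    have hEc : PowerSeries.constantCoeff ((1 + Z) * PowerSeries.C e * W) = e := by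
      rw [map_mul, map_mul, map_add, map_one, hZ0, add_zero, one_mul,
        PowerSeries.constantCoeff_C, hWc, mul_one]
    rw [map_sub, hEc]
    exact hJ
  · have hWf : W * f = G * W := by
      calc W * f = W * f * ((1 + Z) * W) := by rw [hW1, mul_one]
        _ = W * (f * (1 + Z)) * W := by simp only [mul_assoc]
        _ = W * ((1 + Z) * G) * W := by rw [← hkey]
        _ = (W * (1 + Z)) * (G * W) := by simp only [mul_assoc]
        _ = G * W := by rw [hW2, one_mul]
    calc f * ((1 + Z) * PowerSeries.C e * W)
        = (f * (1 + Z)) * (PowerSeries.C e * W) := by simp only [mul_assoc]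
      _ = ((1 + Z) * G) * (PowerSeries.C e * W) := by rw [← hkey]
      _ = (1 + Z) * ((G * PowerSeries.C e) * W) := by simp only [mul_assoc]
      _ = (1 + Z) * ((PowerSeries.C e * G) * W) := by rw [← hCeG]
      _ = (1 + Z) * (PowerSeries.C e * (G * W)) := by rw [mul_assoc]
      _ = (1 + Z) * (PowerSeries.C e * (W * f)) := by rw [hWf]
      _ = ((1 + Z) * PowerSeries.C e * W) * f := by simp only [mul_assoc]
end

section
/- If R is a 2-projective-free ring, then the formal power series ring R[[x]] is 2-projective-free. -/
universe u

/-- A ring is 2-projective-free if every 2-generated projective module is free of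
constant rank, i.e. isomorphic to `Rⁿ` for a unique `n ∈ {0, 1, 2}`. -/
def TwoProjectiveFree (R : Type u) [Ring R] : Prop :=
  ∀ (M : Type u) [AddCommGroup M] [Module R M], Module.Projective R M →
    (∃ s : Fin 2 → M, Submodule.span R (Set.range s) = ⊤) →
    ∃! n : ℕ, n ≤ 2 ∧ Nonempty (M ≃ₗ[R] (Fin n → R))

namespace TPFAux

section GenericRing

variable {A : Type*} [Ring A] {p q k : ℕ}

/-- standard basis vector -/
def sb (i : Fin p) : Fin p → A := Pi.single i 1

theorem eq_sum_sb (v : Fin p → A) : v = ∑ i, v i • (sb i : Fin p → A) := by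
  funext l
  simp [sb, Pi.single_apply, Finset.sum_apply, mul_ite, eq_comm]

/-- Any linear map between finite pi-types is given by its "matrix". -/
theorem pi_apply_eq_sum (u : (Fin p → A) →ₗ[A] (Fin q → A)) (v : Fin p → A) (j : Fin q) :
    u v j = ∑ i, v i * u (sb i) j := by
  conv_lhs => rw [eq_sum_sb v]
  rw [map_sum]
  simp [Finset.sum_apply]

theorem span_sb : Submodule.span A (Set.range fun i : Fin p => (sb i : Fin p → A)) = ⊤ := by
  rw [eq_top_iff]
  intro w _
  rw [eq_sum_sb w]
  exact Submodule.sum_mem _ fun i _ =>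
    Submodule.smul_mem _ _ (Submodule.subset_span ⟨i, rfl⟩)

/-- The matrix of a linear map between pi types. -/
def matOf (u : (Fin p → A) →ₗ[A] (Fin q → A)) : Matrix (Fin p) (Fin q) A :=
  Matrix.of fun i j => u (sb i) j

/-- The linear map of a matrix. -/
def linOf (B : Matrix (Fin p) (Fin q) A) : (Fin p → A) →ₗ[A] (Fin q → A) where
  toFun v := fun j => ∑ i, v i * B i j
  map_add' v w := by funext j; simp [add_mul, Finset.sum_add_distrib]
  map_smul' c v := by
    funext j
    simp [Finset.mul_sum, mul_assoc]

theorem linOf_apply (B : Matrix (Fin p) (Fin q) A) (v : Fin p → A) (j : Fin q) :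
    linOf B v j = ∑ i, v i * B i j := rfl

theorem sb_apply_self (i : Fin p) : (sb i : Fin p → A) i = 1 := by simp [sb]

theorem sum_sb_mul (i : Fin p) (f : Fin p → A) :
    ∑ l, (sb i : Fin p → A) l * f l = f i := by
  simp [sb, Pi.single_apply, ite_mul, eq_comm]

theorem linOf_matOf (u : (Fin p → A) →ₗ[A] (Fin q → A)) : linOf (matOf u) = u :=
  LinearMap.ext fun v => funext fun j => by
    rw [linOf_apply, pi_apply_eq_sum u v j]; rfl

theorem matOf_linOf (B : Matrix (Fin p) (Fin q) A) : matOf (linOf B) = B := by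
  ext i j
  simp only [matOf, Matrix.of_apply, linOf_apply]
  exact sum_sb_mul i fun l => B l j

theorem linOf_mul (B : Matrix (Fin p) (Fin q) A) (C : Matrix (Fin q) (Fin k) A) :
    linOf (B * C) = (linOf C).comp (linOf B) :=
  LinearMap.ext fun v => funext fun j => by
    simp only [LinearMap.comp_apply, linOf_apply, Matrix.mul_apply, Finset.mul_sum,
      Finset.sum_mul, mul_assoc]
    rw [Finset.sum_comm]

theorem linOf_one : linOf (1 : Matrix (Fin p) (Fin p) A) = LinearMap.id :=
  LinearMap.ext fun v => funext fun j => by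
    simp [linOf_apply, Matrix.one_apply, mul_ite]

theorem matOf_comp (u : (Fin p → A) →ₗ[A] (Fin q → A)) (w : (Fin q → A) →ₗ[A] (Fin k → A)) :
    matOf (w.comp u) = matOf u * matOf w := by
  ext i j
  simp only [matOf, Matrix.of_apply, LinearMap.comp_apply, Matrix.mul_apply]
  exact pi_apply_eq_sum w (u (sb i)) j

theorem matOf_id : matOf (LinearMap.id : (Fin p → A) →ₗ[A] (Fin p → A)) = 1 := by
  ext i j
  simp [matOf, sb, Pi.single_apply, Matrix.one_apply, eq_comm]

theorem isUnit_matOf (u : (Fin p → A) ≃ₗ[A] (Fin p → A)) :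
    IsUnit (matOf (u : (Fin p → A) →ₗ[A] (Fin p → A))) := by
  have e1 : (u.symm : (Fin p → A) →ₗ[A] (Fin p → A)).comp (u : (Fin p → A) →ₗ[A] (Fin p → A)) = LinearMap.id := by
    ext x; simp
  have e2 : (u : (Fin p → A) →ₗ[A] (Fin p → A)).comp (u.symm : (Fin p → A) →ₗ[A] (Fin p → A)) = LinearMap.id := by
    ext x; simp
  have h1 : matOf (u : (Fin p → A) →ₗ[A] (Fin p → A))
      * matOf (u.symm : (Fin p → A) →ₗ[A] (Fin p → A)) = 1 := by
    rw [← matOf_comp, e1, matOf_id]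
  have h2 : matOf (u.symm : (Fin p → A) →ₗ[A] (Fin p → A))
      * matOf (u : (Fin p → A) →ₗ[A] (Fin p → A)) = 1 := by
    rw [← matOf_comp, e2, matOf_id]
  exact ⟨⟨_, _, h1, h2⟩, rfl⟩

theorem bijective_of_isUnit_matOf (u : (Fin p → A) →ₗ[A] (Fin p → A))
    (h : IsUnit (matOf u)) : Function.Bijective u := by
  obtain ⟨⟨B, C, hBC, hCB⟩, hB⟩ := h
  simp only at hB
  subst hB
  have h1 : (linOf C).comp u = LinearMap.id := by
    rw [← linOf_matOf u, ← linOf_mul, hBC, linOf_one]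
  have h2 : u.comp (linOf C) = LinearMap.id := by
    conv_lhs => rw [← linOf_matOf u]
    rw [← linOf_mul, hCB, linOf_one]
  rw [Function.bijective_iff_has_inverse]
  refine ⟨linOf C, fun x => ?_, fun x => ?_⟩
  · exact congrFun (congrArg DFunLike.coe h1) x
  · exact congrFun (congrArg DFunLike.coe h2) x

end GenericRing

section PS

variable {R : Type u} [Ring R] {p q k : ℕ}

/-- Matrices over power series are power series of matrices. -/
noncomputable def toPS {n : ℕ} :
    Matrix (Fin n) (Fin n) (PowerSeries R) ≃+* PowerSeries (Matrix (Fin n) (Fin n) R) where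
  toFun B := PowerSeries.mk fun d => Matrix.of fun i j => PowerSeries.coeff d (B i j)
  invFun φ := Matrix.of fun i j => PowerSeries.mk fun d => PowerSeries.coeff d φ i j
  left_inv B := Matrix.ext fun i j => PowerSeries.ext fun d => by
    simp [PowerSeries.coeff_mk]
  right_inv φ := PowerSeries.ext fun d => Matrix.ext fun i j => by
    simp [PowerSeries.coeff_mk]
  map_mul' B C := by
    apply PowerSeries.ext
    intro d
    refine Matrix.ext fun i j => ?_
    rw [PowerSeries.coeff_mul]
    simp only [PowerSeries.coeff_mk, Matrix.of_apply, Matrix.mul_apply, Finset.sum_apply,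
      map_sum, PowerSeries.coeff_mul, Matrix.sum_apply]
    rw [Finset.sum_comm]
  map_add' B C := by
    apply PowerSeries.ext
    intro d
    refine Matrix.ext fun i j => ?_
    simp [PowerSeries.coeff_mk]

/-- Reduction of a linear map over `R⟦X⟧` modulo `X`. -/
noncomputable def redMap (u : (Fin p → PowerSeries R) →ₗ[PowerSeries R] (Fin q → PowerSeries R)) :
    (Fin p → R) →ₗ[R] (Fin q → R) where
  toFun w := fun j => PowerSeries.constantCoeff (R := R) (u (fun i => PowerSeries.C (R := R) (w i)) j)
  map_add' w w' := by
    funext j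
    show PowerSeries.constantCoeff (R := R) (u (fun i => PowerSeries.C (R := R) ((w + w') i)) j)
      = PowerSeries.constantCoeff (R := R) (u (fun i => PowerSeries.C (R := R) (w i)) j)
        + PowerSeries.constantCoeff (R := R) (u (fun i => PowerSeries.C (R := R) (w' i)) j)
    have h : (fun i => PowerSeries.C (R := R) ((w + w') i))
        = (fun i => PowerSeries.C (R := R) (w i)) + fun i => PowerSeries.C (R := R) (w' i) := by
      funext i; simp
    rw [h, map_add]
    simp
  map_smul' r w := by
    funext j
    show PowerSeries.constantCoeff (R := R) (u (fun i => PowerSeries.C (R := R) ((r • w) i)) j)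
      = r • PowerSeries.constantCoeff (R := R) (u (fun i => PowerSeries.C (R := R) (w i)) j)
    have h : (fun i => PowerSeries.C (R := R) ((r • w) i))
        = (PowerSeries.C (R := R) r) • fun i => PowerSeries.C (R := R) (w i) := by
      funext i; simp [smul_eq_mul]
    rw [h, map_smul]
    simp [smul_eq_mul]

theorem redMap_apply (u : (Fin p → PowerSeries R) →ₗ[PowerSeries R] (Fin q → PowerSeries R))
    (w : Fin p → R) (j : Fin q) :
    redMap u w j = PowerSeries.constantCoeff (R := R) (u (fun i => PowerSeries.C (R := R) (w i)) j) := rfl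

theorem red_sb (i : Fin p) :
    (fun l => PowerSeries.C (R := R) ((sb i : Fin p → R) l)) = (sb i : Fin p → PowerSeries R) := by
  funext l
  simp [sb, Pi.single_apply, apply_ite (PowerSeries.C (R := R))]

theorem matOf_redMap (u : (Fin p → PowerSeries R) →ₗ[PowerSeries R] (Fin q → PowerSeries R)) :
    matOf (redMap u) = (matOf u).map (PowerSeries.constantCoeff (R := R)) := by
  ext i j
  simp only [matOf, Matrix.of_apply, Matrix.map_apply, redMap_apply, red_sb]

theorem redMap_red (u : (Fin p → PowerSeries R) →ₗ[PowerSeries R] (Fin q → PowerSeries R))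
    (v : Fin p → PowerSeries R) :
    redMap u (fun i => PowerSeries.constantCoeff (R := R) (v i))
      = fun j => PowerSeries.constantCoeff (R := R) (u v j) := by
  funext j
  rw [redMap_apply, pi_apply_eq_sum u v j,
    pi_apply_eq_sum u (fun i => PowerSeries.C (R := R) (PowerSeries.constantCoeff (R := R) (v i))) j]
  simp [map_sum]

theorem redMap_comp (u : (Fin p → PowerSeries R) →ₗ[PowerSeries R] (Fin q → PowerSeries R))
    (u' : (Fin q → PowerSeries R) →ₗ[PowerSeries R] (Fin k → PowerSeries R)) :
    redMap (u'.comp u) = (redMap u').comp (redMap u) :=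
  LinearMap.ext fun w => by
    rw [LinearMap.comp_apply]
    have h1 : redMap u w = fun i => PowerSeries.constantCoeff (R := R)
        (u (fun i' => PowerSeries.C (R := R) (w i')) i) := rfl
    rw [h1, redMap_red]
    rfl

theorem redMap_id :
    redMap (LinearMap.id : (Fin p → PowerSeries R) →ₗ[PowerSeries R] (Fin p → PowerSeries R))
      = LinearMap.id :=
  LinearMap.ext fun w => by funext j; simp [redMap_apply]

theorem redMap_add
    (u u' : (Fin p → PowerSeries R) →ₗ[PowerSeries R] (Fin q → PowerSeries R)) :
    redMap (u + u') = redMap u + redMap u' :=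
  LinearMap.ext fun w => by funext j; simp [redMap_apply]

theorem redMap_sub
    (u u' : (Fin p → PowerSeries R) →ₗ[PowerSeries R] (Fin q → PowerSeries R)) :
    redMap (u - u') = redMap u - redMap u' :=
  LinearMap.ext fun w => by funext j; simp [redMap_apply]

/-- Lift an `R`-linear map to an `R⟦X⟧`-linear map, coefficientwise. -/
noncomputable def liftMap (t : (Fin p → R) →ₗ[R] (Fin q → R)) :
    (Fin p → PowerSeries R) →ₗ[PowerSeries R] (Fin q → PowerSeries R) :=
  linOf ((matOf t).map (PowerSeries.C (R := R)))

theorem liftMap_comp (t : (Fin p → R) →ₗ[R] (Fin q → R))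
    (t' : (Fin q → R) →ₗ[R] (Fin k → R)) :
    liftMap (t'.comp t) = (liftMap t').comp (liftMap t) := by
  rw [liftMap, matOf_comp, Matrix.map_mul, linOf_mul]
  rfl

theorem liftMap_id :
    liftMap (LinearMap.id : (Fin p → R) →ₗ[R] (Fin p → R)) = LinearMap.id := by
  rw [liftMap, matOf_id, Matrix.map_one _ (map_zero _) (map_one _), linOf_one]

theorem redMap_liftMap (t : (Fin p → R) →ₗ[R] (Fin q → R)) : redMap (liftMap t) = t := by
  conv_rhs => rw [← linOf_matOf t]
  refine LinearMap.ext fun w => funext fun j => ?_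
  rw [redMap_apply, liftMap]
  rw [linOf_apply, map_sum, linOf_apply]
  refine Finset.sum_congr rfl fun i _ => ?_
  simp [Matrix.map_apply]

/-- Key lifting lemma: a linear endomorphism of `(R⟦X⟧)ᵏ` whose reduction mod `X`
is bijective is itself bijective. -/
theorem bijective_of_redMap_bijective
    (u : (Fin k → PowerSeries R) →ₗ[PowerSeries R] (Fin k → PowerSeries R))
    (h : Function.Bijective (redMap u)) : Function.Bijective u := by
  apply bijective_of_isUnit_matOf
  have h1 : IsUnit (matOf (redMap u)) := isUnit_matOf (LinearEquiv.ofBijective _ h)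
  have hcc : PowerSeries.constantCoeff (toPS (matOf u)) = matOf (redMap u) := by
    rw [matOf_redMap]
    ext i j
    simp [toPS, Matrix.map_apply, ← PowerSeries.coeff_zero_eq_constantCoeff]
  have h2 : IsUnit (toPS (matOf u)) :=
    PowerSeries.isUnit_iff_constantCoeff.mpr (by rw [hcc]; exact h1)
  have h3 := h2.map (toPS (R := R) (n := k)).symm
  rwa [RingEquiv.symm_apply_apply] at h3

end PS

end TPFAux

open TPFAux

set_option maxHeartbeats 1000000

theorem twoProjectiveFree_powerSeries {R : Type u} [Ring R]
    (hR : TwoProjectiveFree R) : TwoProjectiveFree (PowerSeries R) := by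
  classical
  intro M _ _ hproj hgen
  haveI := hproj
  obtain ⟨s, hs⟩ := hgen
  -- the surjection π : S² → M and its splitting σ
  let π : (Fin 2 → PowerSeries R) →ₗ[PowerSeries R] M :=
    { toFun := fun v => ∑ i, v i • s i
      map_add' := fun v w => by
        show ∑ i : Fin 2, (v + w) i • s i = (∑ i : Fin 2, v i • s i) + ∑ i : Fin 2, w i • s i
        rw [← Finset.sum_add_distrib]
        exact Finset.sum_congr rfl fun i _ => by
          show (v i + w i) • s i = v i • s i + w i • s i
          rw [add_smul]
      map_smul' := fun c v => by
        show ∑ i : Fin 2, (c • v) i • s i = c • ∑ i : Fin 2, v i • s i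
        rw [Finset.smul_sum]
        exact Finset.sum_congr rfl fun i _ => by
          show (c * v i) • s i = c • (v i • s i)
          rw [mul_smul] }
  have hπs : ∀ i : Fin 2, π (sb i) = s i := fun i => by
    show ∑ l : Fin 2, (sb i : Fin 2 → PowerSeries R) l • s l = s i
    simp [sb, Pi.single_apply, ite_smul, eq_comm]
  have hπ : Function.Surjective π := by
    rw [← LinearMap.range_eq_top, eq_top_iff, ← hs, Submodule.span_le]
    rintro m ⟨i, rfl⟩
    exact ⟨sb i, hπs i⟩
  clear_value π
  obtain ⟨σ, hσ⟩ := Module.projective_lifting_property π LinearMap.id hπ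
  have hσ' : ∀ m, π (σ m) = m := fun m => DFunLike.congr_fun hσ m
  -- the idempotent e and its reduction
  let e := σ.comp π
  have he_def : ∀ z, e z = σ (π z) := fun z => rfl
  clear_value e
  have he' : ∀ z, e (e z) = e z := fun z => by
    rw [he_def, he_def, hσ']
  have hee : e.comp e = e := LinearMap.ext he'
  let ebar := redMap e
  have hebar_def : ebar = redMap e := rfl
  clear_value ebar
  have hebar : ebar.comp ebar = ebar := by
    rw [hebar_def, ← redMap_comp, hee]
  have hebar' : ∀ w, ebar (ebar w) = ebar w := fun w => DFunLike.congr_fun hebar w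
  -- the range of ebar is 2-generated projective over R
  set P := LinearMap.range ebar with hP
  have hres : ∀ x : P, ebar.rangeRestrict x.val = x := by
    rintro ⟨x, w, rfl⟩
    apply Subtype.ext
    show ebar (ebar w) = ebar w
    exact hebar' w
  have hPproj : Module.Projective R P :=
    Module.Projective.of_split P.subtype ebar.rangeRestrict (LinearMap.ext fun x => hres x)
  have hPgen : ∃ t : Fin 2 → P, Submodule.span R (Set.range t) = ⊤ := by
    refine ⟨fun i => ebar.rangeRestrict (sb i), ?_⟩
    rw [eq_top_iff]
    intro x _
    obtain ⟨v, rfl⟩ := ebar.surjective_rangeRestrict x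
    rw [eq_sum_sb v, map_sum]
    refine Submodule.sum_mem _ fun i _ => ?_
    rw [map_smul]
    exact Submodule.smul_mem _ _ (Submodule.subset_span ⟨i, rfl⟩)
  obtain ⟨n, ⟨hn2, ⟨γ⟩⟩, -⟩ := hR P hPproj hPgen
  -- split ebar through R^n
  let abar : (Fin n → R) →ₗ[R] (Fin 2 → R) :=
    P.subtype.comp (γ.symm : (Fin n → R) →ₗ[R] P)
  let bbar : (Fin 2 → R) →ₗ[R] (Fin n → R) :=
    (γ : P →ₗ[R] (Fin n → R)).comp ebar.rangeRestrict
  have hba : bbar.comp abar = LinearMap.id := by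
    refine LinearMap.ext fun w => ?_
    show γ (ebar.rangeRestrict ((γ.symm w).val)) = w
    rw [hres (γ.symm w)]
    exact γ.apply_symm_apply w
  have hab : abar.comp bbar = ebar := by
    refine LinearMap.ext fun w => ?_
    show ((γ.symm (γ (ebar.rangeRestrict w))) : Fin 2 → R) = ebar w
    rw [γ.symm_apply_apply]
    rfl
  clear_value abar bbar
  -- lift everything to S
  let a := liftMap abar
  let b := liftMap bbar
  let f := liftMap ebar
  have hba' : b.comp a = LinearMap.id := by
    show (liftMap bbar).comp (liftMap abar) = LinearMap.id
    rw [← liftMap_comp, hba, liftMap_id]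
  have hf_ab : f = a.comp b := by
    show liftMap ebar = (liftMap abar).comp (liftMap bbar)
    rw [← liftMap_comp, hab]
  have hff : f.comp f = f := by
    show (liftMap ebar).comp (liftMap ebar) = liftMap ebar
    rw [← liftMap_comp, hebar]
  have hredf : redMap f = ebar := redMap_liftMap ebar
  clear_value a b f
  have hba'' : ∀ w, b (a w) = w := fun w => DFunLike.congr_fun hba' w
  have hf_ab' : ∀ z, f z = a (b z) := fun z => DFunLike.congr_fun hf_ab z
  have hff' : ∀ z, f (f z) = f z := fun z => DFunLike.congr_fun hff z
  -- the conjugating automorphism v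
  let v := f.comp e + (LinearMap.id - f).comp (LinearMap.id - e)
  have hv_apply : ∀ z, v z = f (e z) + ((z - e z) - f (z - e z)) := fun z => rfl
  have hv_def : v = f.comp e + (LinearMap.id - f).comp (LinearMap.id - e) := rfl
  clear_value v
  have hve : ∀ z, v (e z) = f (v z) := by
    intro z
    rw [hv_apply, hv_apply]
    simp only [he', sub_self, map_zero, add_zero, sub_zero, map_add, map_sub, hff']
  have hv_red : redMap v = LinearMap.id := by
    rw [hv_def, redMap_add, redMap_comp, redMap_comp, redMap_sub, redMap_sub, redMap_id,
      hredf, ← hebar_def]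
    refine LinearMap.ext fun w => ?_
    simp only [LinearMap.add_apply, LinearMap.sub_apply, LinearMap.comp_apply,
      LinearMap.id_apply, map_sub, hebar']
    show ebar w + ((w - ebar w) - (ebar w - ebar w)) = w
    abel
  have hvbij : Function.Bijective v :=
    bijective_of_redMap_bijective v (by rw [hv_red]; exact Function.bijective_id)
  let V := LinearEquiv.ofBijective v hvbij
  let vi : (Fin 2 → PowerSeries R) →ₗ[PowerSeries R] (Fin 2 → PowerSeries R) :=
    (V.symm : (Fin 2 → PowerSeries R) →ₗ[PowerSeries R] (Fin 2 → PowerSeries R))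
  have hviv : ∀ z, vi (v z) = z := fun z => V.symm_apply_apply z
  have hvvi : ∀ z, v (vi z) = z := fun z => V.apply_symm_apply z
  clear_value vi
  -- the isomorphism M ≃ S^n
  let Φ : M →ₗ[PowerSeries R] (Fin n → PowerSeries R) := b.comp (v.comp σ)
  let Ψ : (Fin n → PowerSeries R) →ₗ[PowerSeries R] M := π.comp (vi.comp a)
  have hΦΨ : Φ.comp Ψ = LinearMap.id := by
    refine LinearMap.ext fun w => ?_
    show b (v (σ (π (vi (a w))))) = w
    rw [← he_def, hve, hvvi, hf_ab', hba'', hba'']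
  have hΨΦ : Ψ.comp Φ = LinearMap.id := by
    refine LinearMap.ext fun m => ?_
    show π (vi (a (b (v (σ m))))) = m
    rw [← hf_ab', ← hve, he_def, hσ', hviv, hσ']
  let E : M ≃ₗ[PowerSeries R] (Fin n → PowerSeries R) := LinearEquiv.ofLinear Φ Ψ hΦΨ hΨΦ
  refine ⟨n, ⟨hn2, ⟨E⟩⟩, ?_⟩
  -- uniqueness of the rank
  rintro n' ⟨hn'2, ⟨W⟩⟩
  let W2 : (Fin n → PowerSeries R) ≃ₗ[PowerSeries R] (Fin n' → PowerSeries R) :=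
    E.symm.trans W
  let t := redMap (W2 : (Fin n → PowerSeries R) →ₗ[PowerSeries R] (Fin n' → PowerSeries R))
  let t' := redMap (W2.symm : (Fin n' → PowerSeries R) →ₗ[PowerSeries R] (Fin n → PowerSeries R))
  have ht1 : t.comp t' = LinearMap.id := by
    show (redMap _).comp (redMap _) = LinearMap.id
    rw [← redMap_comp, ← redMap_id (R := R) (p := n')]
    congr 1
    exact LinearMap.ext fun x => W2.apply_symm_apply x
  have ht2 : t'.comp t = LinearMap.id := by
    show (redMap _).comp (redMap _) = LinearMap.id
    rw [← redMap_comp, ← redMap_id (R := R) (p := n)]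
    congr 1
    exact LinearMap.ext fun x => W2.symm_apply_apply x
  let D : (Fin n → R) ≃ₗ[R] (Fin n' → R) := LinearEquiv.ofLinear t t' ht1 ht2
  have hgenn : ∃ t : Fin 2 → (Fin n → R), Submodule.span R (Set.range t) = ⊤ := by
    refine ⟨fun i => fun l => if (l : ℕ) = (i : ℕ) then 1 else 0, ?_⟩
    rw [eq_top_iff, ← span_sb (A := R) (p := n)]
    refine Submodule.span_mono ?_
    rintro x ⟨j, rfl⟩
    refine ⟨⟨(j : ℕ), lt_of_lt_of_le j.2 hn2⟩, ?_⟩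
    funext l
    simp [sb, Pi.single_apply, Fin.ext_iff, eq_comm]
  obtain ⟨k0, -, hk0⟩ := hR (Fin n → R) inferInstance hgenn
  have e1 : n = k0 := hk0 n ⟨hn2, ⟨LinearEquiv.refl R _⟩⟩
  have e2 : n' = k0 := hk0 n' ⟨hn'2, ⟨D⟩⟩
  exact e2.trans e1.symm
end

section
/- Let R be a ring and let I be a two-sided ideal of R with I ⊆ J(R). If the quotient ring R/I is 2-projective-free, then R is 2-projective-free. -/
universe u

section Aux

variable {R : Type u} [Ring R]

lemma jacRadical_isUnit {a : R} (ha : a ∈ (⊥ : Ideal R).jacobson) : IsUnit (1 - a) := by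
  have L : ∀ b : R, b ∈ (⊥ : Ideal R).jacobson → ∃ z : R, z * (1 - b) = 1 := by
    intro b hb
    obtain ⟨z, hz⟩ := Ideal.mem_jacobson_iff.1 hb (-1)
    refine ⟨z, ?_⟩
    rw [Ideal.mem_bot, sub_eq_zero] at hz
    calc z * (1 - b) = z * -1 * b + z := by noncomm_ring
    _ = 1 := hz
  obtain ⟨z, hz⟩ := L a ha
  have hza : z * a ∈ (⊥ : Ideal R).jacobson := Ideal.mul_mem_left _ z ha
  have hz' : z = 1 - -(z * a) := by
    have h1 : z * (1 - a) = z - z * a := by noncomm_ring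
    rw [h1] at hz
    rw [sub_neg_eq_add]
    exact eq_add_of_sub_eq hz
  obtain ⟨w, hw⟩ := L (-(z * a)) (neg_mem hza)
  rw [← hz'] at hw
  have hw' : w = 1 - a := by
    calc w = w * (z * (1 - a)) := by rw [hz, mul_one]
    _ = w * z * (1 - a) := by noncomm_ring
    _ = 1 - a := by rw [hw, one_mul]
  exact ⟨⟨1 - a, z, by rw [← hw', hw], hz⟩, rfl⟩

lemma pi_single_sum {n : ℕ} (v : Fin n → R) :
    ∑ i, v i • (Pi.single i (1 : R) : Fin n → R) = v := by
  funext j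
  rw [Finset.sum_apply]
  have : ∀ i : Fin n, (v i • (Pi.single i (1 : R) : Fin n → R)) j = if j = i then v i else 0 := by
    intro i
    rw [Pi.smul_apply, Pi.single_apply]
    by_cases h : j = i <;> simp [h]
  simp_rw [this]
  simp

/-- Linear combination map. -/
def lcomb {A : Type u} [Ring A] {P : Type u} [AddCommGroup P] [Module A P] {k : ℕ}
    (c : Fin k → P) : (Fin k → A) →ₗ[A] P where
  toFun v := ∑ i, v i • c i
  map_add' x y := by simp [add_smul, Finset.sum_add_distrib]
  map_smul' r x := by simp [mul_smul, Finset.smul_sum]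

lemma lcomb_apply {A : Type u} [Ring A] {P : Type u} [AddCommGroup P] [Module A P] {k : ℕ}
    (c : Fin k → P) (v : Fin k → A) : lcomb c v = ∑ i, v i • c i := rfl

/-- The submodule `I • M` of a module `M`. -/
abbrev NN (I : TwoSidedIdeal R) (M : Type u) [AddCommGroup M] [Module R M] : Submodule R M :=
  TwoSidedIdeal.asIdeal I • (⊤ : Submodule R M)

lemma mem_smul_span_fin (I : TwoSidedIdeal R) {M : Type u} [AddCommGroup M] [Module R M]
    {k : ℕ} (g : Fin k → M) {x : M}
    (hx : x ∈ TwoSidedIdeal.asIdeal I • Submodule.span R (Set.range g)) :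
    ∃ a : Fin k → R, (∀ i, a i ∈ I) ∧ ∑ i, a i • g i = x := by
  refine Submodule.smul_induction_on hx ?_ ?_
  · intro r hr nn hn
    obtain ⟨c, hc⟩ := (Submodule.mem_span_range_iff_exists_fun R).1 hn
    refine ⟨fun i => r * c i, fun i => I.mul_mem_right _ _ (TwoSidedIdeal.mem_asIdeal.1 hr), ?_⟩
    rw [← hc, Finset.smul_sum]
    simp [mul_smul]
  · rintro x y ⟨a, ha, rfl⟩ ⟨b, hb, rfl⟩
    exact ⟨a + b, fun i => I.add_mem (ha i) (hb i), by simp [add_smul, Finset.sum_add_distrib]⟩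

lemma nak_span (I : TwoSidedIdeal R) (hI : ∀ x ∈ I, x ∈ (⊥ : Ideal R).jacobson)
    {M : Type u} [AddCommGroup M] [Module R M] :
    ∀ (k : ℕ) (g : Fin k → M),
      Submodule.span R (Set.range g) ≤ TwoSidedIdeal.asIdeal I • Submodule.span R (Set.range g) →
      Submodule.span R (Set.range g) = ⊥ := by
  intro k
  induction k with
  | zero =>
    intro g _
    rw [Set.range_eq_empty, Submodule.span_empty]
  | succ k ih =>
    intro g h
    set K := Submodule.span R (Set.range g) with hK
    have hlast : g (Fin.last k) ∈ TwoSidedIdeal.asIdeal I • K :=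
      h (Submodule.subset_span (Set.mem_range_self _))
    obtain ⟨a, ha, hsum⟩ := mem_smul_span_fin I g hlast
    set K' := Submodule.span R (Set.range (g ∘ Fin.castSucc)) with hK'
    have hw : (1 - a (Fin.last k)) • g (Fin.last k)
        = ∑ i : Fin k, a i.castSucc • g i.castSucc := by
      rw [sub_smul, one_smul]
      rw [Fin.sum_univ_castSucc] at hsum
      exact (eq_sub_of_add_eq hsum).symm
    have hmemw : (1 - a (Fin.last k)) • g (Fin.last k) ∈ K' := by
      rw [hw]
      exact Submodule.sum_mem _ fun i _ =>
        Submodule.smul_mem _ _ (Submodule.subset_span (Set.mem_range_self i))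
    obtain ⟨u, hu⟩ := jacRadical_isUnit (hI _ (ha (Fin.last k)))
    have hglast : g (Fin.last k) ∈ K' := by
      have : g (Fin.last k) = (↑u⁻¹ : R) • ((1 - a (Fin.last k)) • g (Fin.last k)) := by
        rw [smul_smul, ← hu, Units.inv_mul, one_smul]
      rw [this]
      exact Submodule.smul_mem _ _ hmemw
    have hKK' : K = K' := by
      apply le_antisymm
      · rw [hK]
        apply Submodule.span_le.2
        rintro _ ⟨j, rfl⟩
        refine Fin.lastCases ?_ ?_ j
        · exact hglast
        · intro i
          exact Submodule.subset_span (Set.mem_range_self i)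
      · rw [hK, hK']
        apply Submodule.span_le.2
        rintro _ ⟨i, rfl⟩
        exact Submodule.subset_span (Set.mem_range_self _)
    rw [hKK'] at h ⊢
    exact ih _ h

lemma nak_top (I : TwoSidedIdeal R) (hI : ∀ x ∈ I, x ∈ (⊥ : Ideal R).jacobson)
    {M : Type u} [AddCommGroup M] [Module R M] (s : Fin 2 → M)
    (hs : Submodule.span R (Set.range s) = ⊤) (P : Submodule R M)
    (hP : ∀ m : M, m ∈ P ⊔ NN I M) : P = ⊤ := by
  set q := P.mkQ with hq
  have hqsurj : Function.Surjective q := Submodule.mkQ_surjective P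
  have hgen : Submodule.span R (Set.range (q ∘ s)) = ⊤ := by
    rw [Set.range_comp, Submodule.span_image, hs, Submodule.map_top, Submodule.range_mkQ]
  have htle : (⊤ : Submodule R (M ⧸ P)) ≤
      TwoSidedIdeal.asIdeal I • (⊤ : Submodule R (M ⧸ P)) := by
    intro x _
    obtain ⟨m, rfl⟩ := hqsurj x
    obtain ⟨p, hp, n, hn, rfl⟩ := Submodule.mem_sup.1 (hP m)
    rw [map_add]
    have hp0 : q p = 0 := by
      rw [hq, Submodule.mkQ_apply, Submodule.Quotient.mk_eq_zero]
      exact hp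
    rw [hp0, zero_add]
    have : q n ∈ Submodule.map q (TwoSidedIdeal.asIdeal I • (⊤ : Submodule R M)) :=
      Submodule.mem_map_of_mem hn
    rw [Submodule.map_smul''] at this
    exact (smul_mono_right _ le_top : _ ≤ TwoSidedIdeal.asIdeal I • (⊤ : Submodule R (M ⧸ P))) this
  have hbot : Submodule.span R (Set.range (q ∘ s)) = ⊥ := by
    apply nak_span I hI 2 (q ∘ s)
    rw [hgen]
    exact htle
  rw [hgen] at hbot
  ext m
  simp only [Submodule.mem_top, iff_true]
  have hm0 : q m = 0 := by
    have hm : q m ∈ (⊤ : Submodule R (M ⧸ P)) := trivial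
    rw [hbot] at hm
    simpa using hm
  rwa [hq, Submodule.mkQ_apply, Submodule.Quotient.mk_eq_zero] at hm0

end Aux

section QuotMod

variable {R : Type u} [Ring R] (I : TwoSidedIdeal R)

lemma ringConMk_eq_zero_iff (a : R) : I.ringCon.mk' a = 0 ↔ a ∈ I := by
  have h0 : (0 : I.ringCon.Quotient) = I.ringCon.mk' 0 := rfl
  rw [h0]
  rw [show (I.ringCon.mk' a = I.ringCon.mk' 0) ↔ I.ringCon a 0 from RingCon.eq _]
  rw [TwoSidedIdeal.rel_iff, sub_zero]

lemma ringConMk_surjective : Function.Surjective I.ringCon.mk' := fun x =>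
  Quotient.inductionOn' x fun r => ⟨r, rfl⟩

variable (M : Type u) [AddCommGroup M] [Module R M]

/-- The quotient module `M / IM`. -/
abbrev QM : Type u := M ⧸ NN I M

variable {I M} in
lemma smul_mem_NN {a : R} (ha : a ∈ I) (m : M) : a • m ∈ NN I M :=
  Submodule.smul_mem_smul (TwoSidedIdeal.mem_asIdeal.2 ha) trivial

variable {I M} in
lemma QM.smul_eq_zero' {a : R} (ha : a ∈ I) (x : QM I M) : a • x = 0 := by
  obtain ⟨m, rfl⟩ := Submodule.mkQ_surjective (NN I M) x
  rw [Submodule.mkQ_apply, ← Submodule.Quotient.mk_smul, Submodule.Quotient.mk_eq_zero]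
  exact smul_mem_NN ha m

instance : SMul I.ringCon.Quotient (QM I M) :=
  ⟨fun s x => Quotient.liftOn' s (fun r => r • x) (by
    intro r r' h
    have hrr : r - r' ∈ I := (TwoSidedIdeal.rel_iff I r r').1 h
    have hz := QM.smul_eq_zero' hrr x
    rw [sub_smul, sub_eq_zero] at hz
    exact hz)⟩

variable {I M} in
lemma QM.mk_smul (r : R) (x : QM I M) : I.ringCon.mk' r • x = r • x := rfl

instance : Module I.ringCon.Quotient (QM I M) :=
  Function.Surjective.moduleLeft I.ringCon.mk' (ringConMk_surjective I) QM.mk_smul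

variable {I M}

lemma liftQS_aux {P : Type u} [AddCommGroup P] [Module I.ringCon.Quotient P] (g : M →+ P)
    (hsmul : ∀ (r : R) (m : M), g (r • m) = I.ringCon.mk' r • g m) :
    ∀ n ∈ (NN I M).toAddSubgroup, g n = 0 := by
  intro n hn
  refine Submodule.smul_induction_on hn ?_ ?_
  · intro r hr m _
    rw [hsmul, (ringConMk_eq_zero_iff I r).2 (TwoSidedIdeal.mem_asIdeal.1 hr), zero_smul]
  · intro x y hx hy
    rw [map_add, hx, hy, add_zero]

/-- Lift an additive map `M →+ P` compatible with scalars to an `S`-linear map on `M/IM`. -/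
def liftQS {P : Type u} [AddCommGroup P] [Module I.ringCon.Quotient P] (g : M →+ P)
    (hsmul : ∀ (r : R) (m : M), g (r • m) = I.ringCon.mk' r • g m) :
    QM I M →ₗ[I.ringCon.Quotient] P where
  toFun := QuotientAddGroup.lift (NN I M).toAddSubgroup g (fun n hn => AddMonoidHom.mem_ker.2 (liftQS_aux g hsmul n hn))
  map_add' := map_add _
  map_smul' := by
    intro s x
    obtain ⟨r, rfl⟩ := ringConMk_surjective I s
    obtain ⟨m, rfl⟩ := Submodule.mkQ_surjective (NN I M) x
    show QuotientAddGroup.lift _ g _ (I.ringCon.mk' r • (Submodule.Quotient.mk m : QM I M)) = _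
    rw [QM.mk_smul, ← Submodule.Quotient.mk_smul]
    show g (r • m) = I.ringCon.mk' r • g m
    exact hsmul r m

lemma liftQS_mk {P : Type u} [AddCommGroup P] [Module I.ringCon.Quotient P] (g : M →+ P)
    (hsmul : ∀ (r : R) (m : M), g (r • m) = I.ringCon.mk' r • g m) (m : M) :
    liftQS g hsmul (Submodule.Quotient.mk m) = g m := rfl

/-- An isomorphism `M ≃ Rᵐ` induces `M/IM ≃ Sᵐ`. -/
lemma QM_equiv_of_equiv {m : ℕ} (em : M ≃ₗ[R] (Fin m → R)) :
    Nonempty (QM I M ≃ₗ[I.ringCon.Quotient] (Fin m → I.ringCon.Quotient)) := by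
  classical
  let g : M →+ (Fin m → I.ringCon.Quotient) :=
    { toFun := fun x i => I.ringCon.mk' (em x i)
      map_zero' := by funext i; simp
      map_add' := by intro x y; funext i; simp }
  have hg : ∀ (r : R) (x : M), g (r • x) = I.ringCon.mk' r • g x := by
    intro r x
    funext i
    show I.ringCon.mk' (em (r • x) i) = I.ringCon.mk' r * I.ringCon.mk' (em x i)
    rw [map_smul]
    show I.ringCon.mk' (r * em x i) = _
    rw [map_mul]
  let L := liftQS g hg
  have hsurj : Function.Surjective L := by
    intro v
    choose r hr using fun i => ringConMk_surjective I (v i)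
    refine ⟨Submodule.Quotient.mk (em.symm r), ?_⟩
    show g (em.symm r) = v
    funext i
    show I.ringCon.mk' (em (em.symm r) i) = v i
    rw [LinearEquiv.apply_symm_apply]
    exact hr i
  have hinj : Function.Injective L := by
    rw [← LinearMap.ker_eq_bot (f := L), LinearMap.ker_eq_bot']
    intro x hx
    obtain ⟨x', rfl⟩ := Submodule.mkQ_surjective (NN I M) x
    rw [Submodule.mkQ_apply] at hx ⊢
    have hcoord : ∀ i, em x' i ∈ TwoSidedIdeal.asIdeal I := by
      intro i
      have h1 : g x' = 0 := hx
      have h2 : I.ringCon.mk' (em x' i) = 0 := congrFun h1 i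
      exact TwoSidedIdeal.mem_asIdeal.2 ((ringConMk_eq_zero_iff I _).1 h2)
    have hmem : em x' ∈ TwoSidedIdeal.asIdeal I • (⊤ : Submodule R (Fin m → R)) := by
      rw [← pi_single_sum (em x')]
      exact Submodule.sum_mem _ fun i _ => Submodule.smul_mem_smul (hcoord i) trivial
    have h3 : em.symm (em x') ∈
        Submodule.map (em.symm : (Fin m → R) ≃ₗ[R] M).toLinearMap
          (TwoSidedIdeal.asIdeal I • (⊤ : Submodule R (Fin m → R))) :=
      Submodule.mem_map_of_mem hmem
    rw [Submodule.map_smul''] at h3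
    rw [LinearEquiv.symm_apply_apply] at h3
    rw [Submodule.Quotient.mk_eq_zero]
    exact (smul_mono_right _ le_top : _ ≤ TwoSidedIdeal.asIdeal I • (⊤ : Submodule R M)) h3
  exact ⟨LinearEquiv.ofBijective L ⟨hinj, hsurj⟩⟩

end QuotMod

theorem twoProjectiveFree_of_quotient {R : Type u} [Ring R] (I : TwoSidedIdeal R)
    (hI : ∀ x ∈ I, x ∈ (⊥ : Ideal R).jacobson)
    (hq : TwoProjectiveFree I.ringCon.Quotient) : TwoProjectiveFree R := by
  intro M iac imod hproj hgen
  obtain ⟨s, hs⟩ := hgen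
  classical
  -- the quotient map
  set q : M →ₗ[R] QM I M := (NN I M).mkQ with hqdef
  -- a retraction exhibiting `M` as a direct summand of `R²`
  set π : (Fin 2 → R) →ₗ[R] M := lcomb s with hπdef
  have hπ : Function.Surjective π := by
    intro m
    obtain ⟨c, hc⟩ := (Submodule.mem_span_range_iff_exists_fun R).1 (hs ▸ Submodule.mem_top (x := m))
    exact ⟨c, hc⟩
  obtain ⟨σ, hσ⟩ := Module.projective_lifting_property π LinearMap.id hπ
  have hσ' : ∀ x : M, π (σ x) = x := fun x => congrArg (fun f => f x) hσ
  -- the induced splitting over the quotient ring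
  let gσ : M →+ (Fin 2 → I.ringCon.Quotient) :=
    { toFun := fun x i => I.ringCon.mk' (σ x i)
      map_zero' := by funext i; simp
      map_add' := by intro x y; funext i; simp }
  have hgσ : ∀ (r : R) (x : M), gσ (r • x) = I.ringCon.mk' r • gσ x := by
    intro r x
    funext i
    show I.ringCon.mk' (σ (r • x) i) = I.ringCon.mk' r * I.ringCon.mk' (σ x i)
    rw [map_smul]
    show I.ringCon.mk' (r * σ x i) = _
    rw [map_mul]
  let σb := liftQS gσ hgσ
  let πb : (Fin 2 → I.ringCon.Quotient) →ₗ[I.ringCon.Quotient] QM I M :=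
    lcomb (fun i => q (s i))
  have hsplit : πb.comp σb = LinearMap.id := by
    apply LinearMap.ext
    intro x
    obtain ⟨m, rfl⟩ := Submodule.mkQ_surjective (NN I M) x
    rw [Submodule.mkQ_apply]
    show πb (σb (Submodule.Quotient.mk m)) = Submodule.Quotient.mk m
    rw [liftQS_mk]
    show ∑ i, gσ m i • q (s i) = Submodule.Quotient.mk m
    have hterm : ∀ i : Fin 2, gσ m i • q (s i) =
        (Submodule.Quotient.mk (σ m i • s i) : QM I M) := by
      intro i
      show I.ringCon.mk' (σ m i) • q (s i) = _
      rw [QM.mk_smul, hqdef, Submodule.mkQ_apply, ← Submodule.Quotient.mk_smul]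
    rw [Finset.sum_congr rfl fun i _ => hterm i]
    have hms : ∑ i : Fin 2, (Submodule.Quotient.mk (σ m i • s i) : QM I M) =
        Submodule.Quotient.mk (∑ i : Fin 2, σ m i • s i) :=
      (map_sum (NN I M).mkQ (fun i => σ m i • s i) Finset.univ).symm
    rw [hms]
    congr 1
    exact hσ' m
  have hQproj : Module.Projective I.ringCon.Quotient (QM I M) :=
    Module.Projective.of_split σb πb hsplit
  -- generators of the quotient module
  have hspanQ : Submodule.span I.ringCon.Quotient (Set.range fun i => q (s i)) = ⊤ := by
    rw [eq_top_iff]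
    rintro x -
    obtain ⟨m, rfl⟩ := Submodule.mkQ_surjective (NN I M) x
    rw [Submodule.mkQ_apply]
    have hm : m ∈ Submodule.span R (Set.range s) := hs ▸ trivial
    induction hm using Submodule.span_induction with
    | mem y hy =>
      obtain ⟨i, rfl⟩ := hy
      exact Submodule.subset_span ⟨i, rfl⟩
    | zero => simp
    | add y z _ _ hy hz =>
      rw [Submodule.Quotient.mk_add]
      exact add_mem hy hz
    | smul r y _ hy =>
      rw [Submodule.Quotient.mk_smul, ← QM.mk_smul (I := I)]
      exact Submodule.smul_mem _ _ hy
  obtain ⟨n, ⟨hn2, ⟨eQ⟩⟩, hun⟩ := hq (QM I M) hQproj ⟨fun i => q (s i), hspanQ⟩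
  -- lift a basis of the quotient module
  let c : Fin n → QM I M := fun i => eQ.symm (Pi.single i 1)
  have hb : ∀ i, ∃ m : M, (Submodule.Quotient.mk m : QM I M) = c i := fun i =>
    Submodule.mkQ_surjective (NN I M) (c i)
  choose b hbspec using hb
  set φ : (Fin n → R) →ₗ[R] M := lcomb b with hφdef
  have key : ∀ x : Fin n → R,
      eQ (Submodule.Quotient.mk (φ x)) = fun i => I.ringCon.mk' (x i) := by
    intro x
    have h1 : (Submodule.Quotient.mk (φ x) : QM I M) = ∑ i, I.ringCon.mk' (x i) • c i := by
      show (Submodule.Quotient.mk (∑ i, x i • b i) : QM I M) = _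
      have hms : (Submodule.Quotient.mk (∑ i, x i • b i) : QM I M)
          = ∑ i, (Submodule.Quotient.mk (x i • b i) : QM I M) :=
        map_sum (NN I M).mkQ (fun i => x i • b i) Finset.univ
      rw [hms]
      refine Finset.sum_congr rfl fun i _ => ?_
      rw [Submodule.Quotient.mk_smul, ← QM.mk_smul (I := I), hbspec i]
    rw [h1, map_sum]
    have h2 : ∀ i, eQ (I.ringCon.mk' (x i) • c i)
        = I.ringCon.mk' (x i) • (Pi.single i 1 : Fin n → I.ringCon.Quotient) := by
      intro i
      rw [map_smul]
      show _ • eQ (eQ.symm _) = _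
      rw [LinearEquiv.apply_symm_apply]
    rw [Finset.sum_congr rfl fun i _ => h2 i]
    exact pi_single_sum _
  -- surjectivity of φ via Nakayama
  have hφ : Function.Surjective φ := by
    have hspanb : Submodule.span R (Set.range b) = ⊤ := by
      apply nak_top I hI s hs
      intro m
      choose r hr using fun i => ringConMk_surjective I (eQ (Submodule.Quotient.mk m) i)
      have h1 : (Submodule.Quotient.mk (φ r) : QM I M) = Submodule.Quotient.mk m := by
        apply eQ.injective
        rw [key r]
        funext i
        exact hr i
      have h2 : m - φ r ∈ NN I M := by
        have := (Submodule.Quotient.eq (NN I M)).1 h1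
        simpa using neg_mem this
      refine Submodule.mem_sup.2 ⟨φ r, ?_, m - φ r, h2, by abel⟩
      rw [hφdef, lcomb_apply]
      exact Submodule.sum_mem _ fun i _ =>
        Submodule.smul_mem _ _ (Submodule.subset_span ⟨i, rfl⟩)
    intro m
    obtain ⟨cc, hcc⟩ := (Submodule.mem_span_range_iff_exists_fun R).1 (hspanb ▸ Submodule.mem_top (x := m))
    exact ⟨cc, hcc⟩
  -- injectivity of φ via Nakayama
  obtain ⟨ψ, hψ⟩ := Module.projective_lifting_property φ LinearMap.id hφ
  have hψ' : ∀ x : M, φ (ψ x) = x := fun x => congrArg (fun f => f x) hψ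
  set p : (Fin n → R) →ₗ[R] (Fin n → R) := LinearMap.id - ψ.comp φ with hpdef
  have hpk : ∀ v, φ (p v) = 0 := by
    intro v
    show φ (v - ψ (φ v)) = 0
    rw [map_sub, hψ', sub_self]
  have hfix : ∀ v ∈ LinearMap.ker φ, p v = v := by
    intro v hv
    show v - ψ (φ v) = v
    rw [LinearMap.mem_ker.1 hv, map_zero, sub_zero]
  set gK : Fin n → (Fin n → R) := fun i => p (Pi.single i 1) with hgKdef
  have hKspan : LinearMap.ker φ = Submodule.span R (Set.range gK) := by
    apply le_antisymm
    · intro v hv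
      have h1 : v = p v := (hfix v hv).symm
      rw [h1]
      have h2 : p v = ∑ i, v i • gK i := by
        conv_lhs => rw [← pi_single_sum v]
        rw [map_sum]
        exact Finset.sum_congr rfl fun i _ => map_smul p _ _
      rw [h2]
      exact Submodule.sum_mem _ fun i _ =>
        Submodule.smul_mem _ _ (Submodule.subset_span ⟨i, rfl⟩)
    · rw [Submodule.span_le]
      rintro _ ⟨i, rfl⟩
      exact LinearMap.mem_ker.2 (hpk _)
  have hcoord : ∀ v ∈ LinearMap.ker φ, ∀ i, v i ∈ TwoSidedIdeal.asIdeal I := by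
    intro v hv i
    have h0 : eQ (Submodule.Quotient.mk (φ v)) = 0 := by
      rw [LinearMap.mem_ker.1 hv]
      simp
    rw [key v] at h0
    have h1 : I.ringCon.mk' (v i) = 0 := congrFun h0 i
    exact TwoSidedIdeal.mem_asIdeal.2 ((ringConMk_eq_zero_iff I _).1 h1)
  have hKsub : LinearMap.ker φ ≤ TwoSidedIdeal.asIdeal I • LinearMap.ker φ := by
    intro v hv
    have hvI : v ∈ TwoSidedIdeal.asIdeal I • (⊤ : Submodule R (Fin n → R)) := by
      rw [← pi_single_sum v]
      exact Submodule.sum_mem _ fun i _ => Submodule.smul_mem_smul (hcoord v hv i) trivial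
    have h1 : p v ∈ Submodule.map p (TwoSidedIdeal.asIdeal I • (⊤ : Submodule R (Fin n → R))) :=
      Submodule.mem_map_of_mem hvI
    rw [Submodule.map_smul''] at h1
    have hrange : Submodule.map p (⊤ : Submodule R (Fin n → R)) ≤ LinearMap.ker φ := by
      rintro _ ⟨w, -, rfl⟩
      exact LinearMap.mem_ker.2 (hpk w)
    have h2 : p v ∈ TwoSidedIdeal.asIdeal I • LinearMap.ker φ :=
      smul_mono_right _ hrange h1
    rwa [hfix v hv] at h2
  have hker : LinearMap.ker φ = ⊥ := by
    rw [hKspan]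
    apply nak_span I hI n gK
    rw [← hKspan]
    exact hKsub
  have hinj : Function.Injective φ := LinearMap.ker_eq_bot.1 hker
  refine ⟨n, ⟨hn2, ⟨(LinearEquiv.ofBijective φ ⟨hinj, hφ⟩).symm⟩⟩, ?_⟩
  rintro m ⟨hm2, ⟨em⟩⟩
  obtain ⟨eQm⟩ := QM_equiv_of_equiv em
  exact hun m ⟨hm2, ⟨eQm⟩⟩
end

section
/- Let R be a commutative 2-projective-free ring and A ∈ M₂(R). Then A is strongly J-clean if and only if (1) A ∈ J(M₂(R)), or (2) I₂ − A ∈ J(M₂(R)), or (3) A is cyclic and the equation x² − tr(A)x + det(A) = 0 has a root in J(R) and a root in 1 + J(R). -/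
universe u

/-- A matrix `A ∈ M₂(R)` is cyclic if there is a column `α` such that the matrix with
columns `α` and `Aα` is invertible. -/
def IsCyclicMat {R : Type u} [Ring R] (A : Matrix (Fin 2) (Fin 2) R) : Prop :=
  ∃ α : Fin 2 → R, IsUnit (Matrix.of ![α, A.mulVec α]).transpose

open Matrix

variable {R : Type u} [CommRing R]




lemma jacDet {B : Matrix (Fin 2) (Fin 2) R}
    (h : ∀ i j, B i j ∈ (⊥ : Ideal R).jacobson) : IsUnit (B + 1) := by
  rw [Matrix.isUnit_iff_isUnit_det]
  apply Ideal.isUnit_of_sub_one_mem_jacobson_bot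
  have : (B + 1).det - 1 = B 0 0 * B 1 1 + B 0 0 + B 1 1 - B 0 1 * B 1 0 := by
    simp [Matrix.det_fin_two, Matrix.one_apply]; ring
  rw [this]
  have J := (⊥ : Ideal R).jacobson
  exact Ideal.sub_mem _ (Ideal.add_mem _ (Ideal.add_mem _
    (Ideal.mul_mem_right _ _ (h 0 0)) (h 0 0)) (h 1 1)) (Ideal.mul_mem_right _ _ (h 0 1))

lemma memJacMat (B : Matrix (Fin 2) (Fin 2) R) :
    B ∈ (⊥ : Ideal (Matrix (Fin 2) (Fin 2) R)).jacobson ↔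
      ∀ i j, B i j ∈ (⊥ : Ideal R).jacobson := by
  constructor
  · intro hB i j
    rw [Ideal.mem_jacobson_bot]
    intro r
    -- pick Y with single entry r at position (j, i)
    set Y : Matrix (Fin 2) (Fin 2) R := Matrix.of (fun k l => if k = j ∧ l = i then r else 0) with hY
    obtain ⟨Z, hZ⟩ := Ideal.mem_jacobson_iff.1 hB Y
    rw [Ideal.mem_bot, sub_eq_zero] at hZ
    have hZ' : Z * (Y * B + 1) = 1 := by rw [mul_add, mul_one, ← mul_assoc, hZ]
    have hdet : IsUnit ((Y * B + 1).det) := by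
      have : Z.det * (Y * B + 1).det = 1 := by rw [← Matrix.det_mul, hZ', Matrix.det_one]
      exact IsUnit.of_mul_eq_one _ ((mul_comm _ _).trans this)
    have hc : (Y * B + 1).det = B i j * r + 1 := by
      fin_cases i <;> fin_cases j <;>
        simp [hY, Matrix.det_fin_two, Matrix.mul_apply, Fin.sum_univ_two, Matrix.one_apply] <;> ring
    rwa [hc] at hdet
  · intro h
    rw [Ideal.mem_jacobson_iff]
    intro Y
    have hYB : ∀ i j, (Y * B) i j ∈ (⊥ : Ideal R).jacobson := by
      intro i j
      rw [Matrix.mul_apply]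
      exact Ideal.sum_mem _ (fun k _ => Ideal.mul_mem_left _ _ (h k j))
    obtain ⟨u, hu⟩ := jacDet hYB
    refine ⟨↑u⁻¹, ?_⟩
    rw [Ideal.mem_bot, sub_eq_zero, mul_assoc]
    calc ↑u⁻¹ * (Y * B) + ↑u⁻¹ = ↑u⁻¹ * (Y * B + 1) := by rw [mul_add, mul_one]
    _ = 1 := by rw [← hu, Units.inv_mul]





lemma conjEntries {U B V : Matrix (Fin 2) (Fin 2) R}
    (h : ∀ i j, B i j ∈ (⊥ : Ideal R).jacobson) :
    ∀ i j, (U * B * V) i j ∈ (⊥ : Ideal R).jacobson := by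
  intro i j
  rw [Matrix.mul_apply]
  refine Ideal.sum_mem _ (fun l _ => ?_)
  rw [Matrix.mul_apply, Finset.sum_mul]
  exact Ideal.sum_mem _ (fun k _ => Ideal.mul_mem_right _ _ (Ideal.mul_mem_left _ _ (h k l)))

lemma cayleyH2 (A : Matrix (Fin 2) (Fin 2) R) :
    A * A = Matrix.trace A • A - A.det • (1 : Matrix (Fin 2) (Fin 2) R) := by
  ext i j
  fin_cases i <;> fin_cases j <;>
    simp [Matrix.mul_apply, Fin.sum_univ_two, Matrix.trace_fin_two, Matrix.det_fin_two,
      Matrix.one_apply] <;> ring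


lemma jcleanConj {U V B : Matrix (Fin 2) (Fin 2) R} (hUV : U * V = 1) (hVU : V * U = 1)
    (h : IsStronglyJClean B) : IsStronglyJClean (U * B * V) := by
  obtain ⟨e, he, hmem, hcomm⟩ := h
  have key : ∀ X Y : Matrix (Fin 2) (Fin 2) R,
      U * X * V * (U * Y * V) = U * (X * Y) * V := by
    intro X Y
    calc U * X * V * (U * Y * V) = U * (X * ((V * U) * Y)) * V := by
          simp only [mul_assoc]
    _ = U * (X * Y) * V := by rw [hVU, one_mul]
  refine ⟨U * e * V, ?_, ?_, ?_⟩
  · show U * e * V * (U * e * V) = U * e * V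
    rw [key, he]
  · have : U * B * V - U * e * V = U * (B - e) * V := by noncomm_ring
    rw [this, memJacMat]
    exact conjEntries ((memJacMat _).1 hmem)
  · rw [key, key, hcomm]

lemma diagJClean {a b : R} (haJ : a ∈ (⊥ : Ideal R).jacobson)
    (hbJ : b - 1 ∈ (⊥ : Ideal R).jacobson) :
    IsStronglyJClean (Matrix.of ![![a, 0], ![0, b]]) := by
  refine ⟨Matrix.of ![![0, 0], ![0, 1]], ?_, ?_, ?_⟩
  · show _ * _ = _
    ext i j
    fin_cases i <;> fin_cases j <;> simp [Matrix.mul_apply, Fin.sum_univ_two]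
  · rw [memJacMat]
    intro i j
    fin_cases i <;> fin_cases j <;> simp [haJ] <;> exact hbJ
  · ext i j
    fin_cases i <;> fin_cases j <;> simp [Matrix.mul_apply, Fin.sum_univ_two]

lemma converseMain (A : Matrix (Fin 2) (Fin 2) R)
    (h : (∃ α : Fin 2 → R, IsUnit (Matrix.of ![α, A.mulVec α]).transpose) ∧
      (∃ a ∈ (⊥ : Ideal R).jacobson, a ^ 2 - Matrix.trace A * a + A.det = 0) ∧
      (∃ b : R, b - 1 ∈ (⊥ : Ideal R).jacobson ∧ b ^ 2 - Matrix.trace A * b + A.det = 0)) :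
    IsStronglyJClean A := by
  obtain ⟨⟨α, hα⟩, ⟨a, haJ, ha⟩, ⟨b, hbJ, hb⟩⟩ := h
  have hba : IsUnit (b - a) := by
    apply Ideal.isUnit_of_sub_one_mem_jacobson_bot
    have := Ideal.sub_mem _ hbJ haJ
    convert this using 1; ring
  have hab : IsUnit (a - b) := by
    have := hba.neg; rwa [neg_sub] at this
  have htr : Matrix.trace A = a + b := by
    have h1 : (a - b) * (a + b - Matrix.trace A) = 0 := by linear_combination ha - hb
    have h2 := hab.mul_left_cancel (h1.trans (mul_zero _).symm)
    linear_combination -h2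
  have hd : A.det = a * b := by linear_combination ha + a * htr
  set P : Matrix (Fin 2) (Fin 2) R := (Matrix.of ![α, A.mulVec α]).transpose with hPdef
  set C : Matrix (Fin 2) (Fin 2) R := Matrix.of ![![0, -(A.det)], ![1, Matrix.trace A]] with hCdef
  have hCH : A *ᵥ (A *ᵥ α) = Matrix.trace A • (A *ᵥ α) - A.det • α := by
    rw [Matrix.mulVec_mulVec, cayleyH2, Matrix.sub_mulVec, Matrix.smul_mulVec,
      Matrix.smul_mulVec, Matrix.one_mulVec]
  have hCH' : ∀ i, A i 0 * (A 0 0 * α 0 + A 0 1 * α 1) + A i 1 * (A 1 0 * α 0 + A 1 1 * α 1)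
      = A.trace * (A i 0 * α 0 + A i 1 * α 1) - A.det * α i := by
    intro i
    have hv := congrFun hCH i
    simpa only [Matrix.mulVec, dotProduct, Fin.sum_univ_two, Pi.smul_apply, Pi.sub_apply,
      smul_eq_mul] using hv
  have hAP : A * P = P * C := by
    ext i j
    fin_cases j <;> fin_cases i <;>
      simp [hPdef, hCdef, Matrix.mul_apply, Fin.sum_univ_two, Matrix.mulVec,
        dotProduct, Matrix.vecHead, Matrix.vecTail, Fin.mk_zero, Fin.mk_one] <;>
      first
        | linear_combination hCH' 0
        | linear_combination hCH' 1
        | ring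
  set Q : Matrix (Fin 2) (Fin 2) R := Matrix.of ![![-b, -a], ![1, 1]] with hQdef
  have hQ : IsUnit Q := by
    rw [Matrix.isUnit_iff_isUnit_det]
    have : Q.det = a - b := by simp [hQdef, Matrix.det_fin_two]; ring
    rw [this]; exact hab
  set Dg : Matrix (Fin 2) (Fin 2) R := Matrix.of ![![a, 0], ![0, b]] with hDdef
  have hCQ : C * Q = Q * Dg := by
    ext i j
    fin_cases i <;> fin_cases j <;>
      simp [hCdef, hQdef, hDdef, Matrix.mul_apply, Fin.sum_univ_two] <;>
      first
        | linear_combination hd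
        | linear_combination -hd
        | linear_combination htr
        | linear_combination -htr
        | ring
  obtain ⟨s, hs⟩ := hα.mul hQ
  have ht1 : (P * Q) * (↑s⁻¹ : Matrix (Fin 2) (Fin 2) R) = 1 := by
    rw [← hs]; exact s.mul_inv
  have ht2 : (↑s⁻¹ : Matrix (Fin 2) (Fin 2) R) * (P * Q) = 1 := by
    rw [← hs]; exact s.inv_mul
  have hASD : A * (P * Q) = (P * Q) * Dg := by
    rw [← mul_assoc, hAP, mul_assoc, hCQ, ← mul_assoc]
  have hA : A = (P * Q) * Dg * (↑s⁻¹ : Matrix (Fin 2) (Fin 2) R) := by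
    rw [← hASD, mul_assoc, ht1, mul_one]
  rw [hA]
  exact jcleanConj ht1 ht2 (diagJClean haJ hbJ)

lemma idemRange {E : Matrix (Fin 2) (Fin 2) R} (hE : E * E = E) :
    ∀ x ∈ LinearMap.range E.mulVecLin, E *ᵥ x = x := by
  rintro _ ⟨y, rfl⟩
  show E *ᵥ (E *ᵥ y) = E *ᵥ y
  rw [Matrix.mulVec_mulVec, hE]

lemma projRange {E : Matrix (Fin 2) (Fin 2) R} (hE : E * E = E) :
    Module.Projective R ↥(LinearMap.range E.mulVecLin) := by
  refine Module.Projective.of_split (LinearMap.range E.mulVecLin).subtype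
    E.mulVecLin.rangeRestrict ?_
  apply LinearMap.ext
  intro x
  apply Subtype.val_injective
  simpa using idemRange hE x.1 x.2

lemma spanRange (E : Matrix (Fin 2) (Fin 2) R) :
    ∃ s : Fin 2 → ↥(LinearMap.range E.mulVecLin),
      Submodule.span R (Set.range s) = ⊤ := by
  refine ⟨fun i => ⟨E *ᵥ Pi.single i 1, ⟨Pi.single i 1, rfl⟩⟩, ?_⟩
  rw [Submodule.eq_top_iff']
  rintro ⟨x, y, rfl⟩
  have hx : (⟨E.mulVecLin y, ⟨y, rfl⟩⟩ : ↥(LinearMap.range E.mulVecLin)) =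
      ∑ i : Fin 2, y i •
        (⟨E *ᵥ Pi.single i 1, ⟨Pi.single i 1, rfl⟩⟩ : ↥(LinearMap.range E.mulVecLin)) := by
    apply Subtype.val_injective
    push_cast
    show E *ᵥ y = _
    ext j
    simp [Matrix.mulVec, dotProduct, Fin.sum_univ_two, Pi.single_apply]
    ring
  rw [hx]
  exact Submodule.sum_mem _ fun i _ =>
    Submodule.smul_mem _ _ (Submodule.subset_span (Set.mem_range_self i))

lemma eqOfMulVecId {E : Matrix (Fin 2) (Fin 2) R} (h : ∀ v, E *ᵥ v = v) : E = 1 := by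
  ext i j
  have := congrFun (h (Pi.single j 1)) i
  simp only [Matrix.mulVec_single_one] at this
  simpa [Matrix.one_apply, Pi.single_apply, eq_comm] using this

lemma eqZeroOfIso0 {E : Matrix (Fin 2) (Fin 2) R}
    (φ : ↥(LinearMap.range E.mulVecLin) ≃ₗ[R] (Fin 0 → R)) : E = 0 := by
  have hr : ∀ v : Fin 2 → R, E *ᵥ v = 0 := by
    intro v
    have h0 : (⟨E *ᵥ v, ⟨v, rfl⟩⟩ : ↥(LinearMap.range E.mulVecLin)) = 0 := by
      apply φ.injective
      apply Subsingleton.elim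
    exact congrArg Subtype.val h0
  ext i j
  have := congrFun (hr (Pi.single j 1)) i
  simpa [Matrix.mulVec_single_one] using this

lemma eqOneOfIso2 {E : Matrix (Fin 2) (Fin 2) R} (hE : E * E = E)
    (φ : ↥(LinearMap.range E.mulVecLin) ≃ₗ[R] (Fin 2 → R)) : E = 1 := by
  set g : (Fin 2 → R) →ₗ[R] (Fin 2 → R) :=
    (LinearMap.range E.mulVecLin).subtype ∘ₗ (φ.symm : (Fin 2 → R) →ₗ[R] _) with hg
  set h : (Fin 2 → R) →ₗ[R] (Fin 2 → R) :=
    (φ : _ →ₗ[R] (Fin 2 → R)) ∘ₗ E.mulVecLin.rangeRestrict with hh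
  have hhg : h ∘ₗ g = LinearMap.id := by
    apply LinearMap.ext
    intro x
    show φ (E.mulVecLin.rangeRestrict ((φ.symm x) : Fin 2 → R)) = x
    have h1 : E.mulVecLin.rangeRestrict ((φ.symm x) : Fin 2 → R) = φ.symm x := by
      apply Subtype.val_injective
      simpa using idemRange hE (φ.symm x).1 (φ.symm x).2
    rw [h1, φ.apply_symm_apply]
  have hmat : LinearMap.toMatrix' h * LinearMap.toMatrix' g = 1 := by
    rw [← LinearMap.toMatrix'_comp, hhg, LinearMap.toMatrix'_id]
  have hgh : g ∘ₗ h = LinearMap.id := by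
    apply LinearMap.toMatrix'.injective
    rw [LinearMap.toMatrix'_comp, LinearMap.toMatrix'_id]
    exact mul_eq_one_comm.mp hmat
  apply eqOfMulVecId
  intro v
  have hv : v ∈ LinearMap.range E.mulVecLin := by
    have : g (h v) = v := LinearMap.congr_fun hgh v
    rw [← this]
    exact (φ.symm (h v)).2
  exact idemRange hE v hv

lemma rankOneCase {E : Matrix (Fin 2) (Fin 2) R} (hE : E * E = E)
    (φ : ↥(LinearMap.range E.mulVecLin) ≃ₗ[R] (Fin 1 → R))
    (ψ : ↥(LinearMap.range (1 - E).mulVecLin) ≃ₗ[R] (Fin 1 → R)) :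
    ∃ U V : Matrix (Fin 2) (Fin 2) R, U * V = 1 ∧ V * U = 1 ∧
      E * U = U * Matrix.of ![![1, 0], ![0, 0]] := by
  have hF : (1 - E) * (1 - E) = 1 - E := by noncomm_ring [hE]
  set u : Fin 2 → R := ↑(φ.symm 1) with hu'
  set v : Fin 2 → R := ↑(ψ.symm 1) with hv'
  have hu : E *ᵥ u = u := idemRange hE _ (φ.symm 1).2
  have hvF : (1 - E) *ᵥ v = v := idemRange hF _ (ψ.symm 1).2
  have hv : E *ᵥ v = 0 := by
    rw [Matrix.sub_mulVec, Matrix.one_mulVec] at hvF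
    exact sub_eq_self.mp hvF
  have hcu : ∀ x ∈ LinearMap.range E.mulVecLin, ∃ c : R, x = c • u := by
    intro x hx
    refine ⟨(φ ⟨x, hx⟩) 0, ?_⟩
    have h1 : (⟨x, hx⟩ : ↥(LinearMap.range E.mulVecLin)) = ((φ ⟨x, hx⟩) 0) • φ.symm 1 := by
      apply φ.injective
      rw [_root_.map_smul, φ.apply_symm_apply]
      funext i
      fin_cases i
      simp
    calc x = ↑((⟨x, hx⟩ : ↥(LinearMap.range E.mulVecLin))) := rfl
    _ = ((φ ⟨x, hx⟩) 0) • u := by rw [h1]; simp [hu']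
  have hcv : ∀ x ∈ LinearMap.range (1 - E).mulVecLin, ∃ c : R, x = c • v := by
    intro x hx
    refine ⟨(ψ ⟨x, hx⟩) 0, ?_⟩
    have h1 : (⟨x, hx⟩ : ↥(LinearMap.range (1 - E).mulVecLin)) = ((ψ ⟨x, hx⟩) 0) • ψ.symm 1 := by
      apply ψ.injective
      rw [_root_.map_smul, ψ.apply_symm_apply]
      funext i
      fin_cases i
      simp
    calc x = ↑((⟨x, hx⟩ : ↥(LinearMap.range (1 - E).mulVecLin))) := rfl
    _ = ((ψ ⟨x, hx⟩) 0) • v := by rw [h1]; simp [hv']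
  set U : Matrix (Fin 2) (Fin 2) R := (Matrix.of ![u, v]).transpose with hU'
  have hUmul : ∀ c : Fin 2 → R, U *ᵥ c = c 0 • u + c 1 • v := by
    intro c
    ext i
    simp [hU', Matrix.mulVec, dotProduct, Fin.sum_univ_two, Matrix.vecHead,
      Matrix.vecTail]
    ring
  have hsurj : ∀ x : Fin 2 → R, ∃ c : Fin 2 → R, U *ᵥ c = x := by
    intro x
    obtain ⟨c₁, hc₁⟩ := hcu (E *ᵥ x) ⟨x, rfl⟩
    obtain ⟨c₂, hc₂⟩ := hcv ((1 - E) *ᵥ x) ⟨x, rfl⟩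
    refine ⟨![c₁, c₂], ?_⟩
    rw [hUmul]
    show c₁ • u + c₂ • v = x
    rw [← hc₁, ← hc₂, ← Matrix.add_mulVec]
    have h2 : E + (1 - E) = 1 := by abel
    rw [h2, Matrix.one_mulVec]
  obtain ⟨w₀, hw₀⟩ := hsurj (Pi.single 0 1)
  obtain ⟨w₁, hw₁⟩ := hsurj (Pi.single 1 1)
  have hUW : U * (Matrix.of ![w₀, w₁]).transpose = 1 := by
    ext i j
    have h0 := congrFun hw₀ i
    have h1 := congrFun hw₁ i
    simp only [Matrix.mulVec, dotProduct, Fin.sum_univ_two, Pi.single_apply] at h0 h1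
    fin_cases i <;> fin_cases j <;>
      simp only [Fin.mk_zero, Fin.mk_one, Fin.isValue] at h0 h1 ⊢ <;>
      simp [Matrix.mul_apply, Fin.sum_univ_two, Matrix.one_apply, Matrix.vecHead,
        Matrix.vecTail] at h0 h1 ⊢ <;>
      first
        | linear_combination h0
        | linear_combination h1
        | ring
  have hUnit : IsUnit U := by
    rw [Matrix.isUnit_iff_isUnit_det]
    refine IsUnit.of_mul_eq_one (Matrix.of ![w₀, w₁]).transpose.det ?_
    rw [← Matrix.det_mul, hUW, Matrix.det_one]
  obtain ⟨s, hs⟩ := hUnit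
  refine ⟨U, ↑s⁻¹, by rw [← hs]; exact s.mul_inv, by rw [← hs]; exact s.inv_mul, ?_⟩
  ext i j
  have hui := congrFun hu i
  have hvi := congrFun hv i
  simp only [Matrix.mulVec, dotProduct, Fin.sum_univ_two, Pi.zero_apply] at hui hvi
  fin_cases i <;> fin_cases j <;>
    simp only [Fin.mk_zero, Fin.mk_one, Fin.isValue] at hui hvi ⊢ <;>
    simp [hU', Matrix.mul_apply, Fin.sum_univ_two, Matrix.vecHead, Matrix.vecTail] at hui hvi ⊢ <;>
    first
      | linear_combination hui
      | linear_combination hvi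
      | ring

lemma getIso (hR : TwoProjectiveFree R) {E : Matrix (Fin 2) (Fin 2) R} (hE : E * E = E) :
    ∃ n ≤ 2, Nonempty (↥(LinearMap.range E.mulVecLin) ≃ₗ[R] (Fin n → R)) := by
  obtain ⟨n, ⟨hn, hiso⟩, _⟩ := hR ↥(LinearMap.range E.mulVecLin) (projRange hE) (spanRange E)
  exact ⟨n, hn, hiso⟩

lemma forwardMain (hR : TwoProjectiveFree R) (A : Matrix (Fin 2) (Fin 2) R)
    (h : IsStronglyJClean A) :
    A ∈ (⊥ : Ideal (Matrix (Fin 2) (Fin 2) R)).jacobson ∨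
      1 - A ∈ (⊥ : Ideal (Matrix (Fin 2) (Fin 2) R)).jacobson ∨
      ((∃ α : Fin 2 → R, IsUnit (Matrix.of ![α, A.mulVec α]).transpose) ∧
        (∃ a ∈ (⊥ : Ideal R).jacobson, a ^ 2 - Matrix.trace A * a + A.det = 0) ∧
        (∃ b : R, b - 1 ∈ (⊥ : Ideal R).jacobson ∧
          b ^ 2 - Matrix.trace A * b + A.det = 0)) := by
  obtain ⟨E, hIdem, hmem, hcomm⟩ := h
  have hE : E * E = E := hIdem
  obtain ⟨n, hn, ⟨φ⟩⟩ := getIso hR hE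
  interval_cases n
  · left
    have h0 : E = 0 := eqZeroOfIso0 φ
    rw [← sub_zero A, ← h0]
    exact hmem
  · have hF : (1 - E) * (1 - E) = 1 - E := by noncomm_ring [hE]
    obtain ⟨m, hm, ⟨ψ⟩⟩ := getIso hR hF
    interval_cases m
    · right; left
      have h1 : (1 : Matrix (Fin 2) (Fin 2) R) - E = 0 := eqZeroOfIso0 ψ
      have h2 : 1 - A = -(A - E) + (1 - E) := by abel
      rw [h2, h1, add_zero]
      exact neg_mem hmem
    · right; right
      obtain ⟨U, V, hUV, hVU, hEU⟩ := rankOneCase hE φ ψ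
      set D : Matrix (Fin 2) (Fin 2) R := Matrix.of ![![1, 0], ![0, 0]] with hD
      set B : Matrix (Fin 2) (Fin 2) R := V * A * U with hB
      have key : ∀ X Y : Matrix (Fin 2) (Fin 2) R,
          (V * X * U) * (V * Y * U) = V * (X * Y) * U := by
        intro X Y
        calc (V * X * U) * (V * Y * U) = V * (X * ((U * V) * Y)) * U := by
              simp only [mul_assoc]
        _ = V * (X * Y) * U := by rw [hUV, one_mul]
      have hDVE : D = V * E * U := by
        calc D = (V * U) * D := by rw [hVU, one_mul]
        _ = V * (E * U) := by rw [mul_assoc, ← hEU]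
        _ = V * E * U := by rw [mul_assoc]
      have hBD : ∀ i j, (B - D) i j ∈ (⊥ : Ideal R).jacobson := by
        have he : B - D = V * (A - E) * U := by rw [hB, hDVE]; noncomm_ring
        rw [he]
        exact conjEntries ((memJacMat _).1 hmem)
      have hBcomm : B * D = D * B := by
        rw [hDVE, hB, key, key, hcomm]
      have h01 : B 0 1 = 0 := by
        have h3 := congrFun (congrFun hBcomm 0) 1
        simp [hD, Matrix.mul_apply, Fin.sum_univ_two] at h3
        linear_combination -h3
      have h10 : B 1 0 = 0 := by
        have h3 := congrFun (congrFun hBcomm 1) 0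
        simp [hD, Matrix.mul_apply, Fin.sum_univ_two] at h3
        linear_combination h3
      have haJ : B 1 1 ∈ (⊥ : Ideal R).jacobson := by
        have h3 := hBD 1 1
        simpa [hD] using h3
      have hbJ : B 0 0 - 1 ∈ (⊥ : Ideal R).jacobson := by
        have h3 := hBD 0 0
        simpa [hD] using h3
      have hAU : A = U * B * V := by
        rw [hB]
        calc A = (U * V) * A * (U * V) := by rw [hUV, one_mul, mul_one]
        _ = U * (V * A * U) * V := by simp only [mul_assoc]
      have htr : A.trace = B 0 0 + B 1 1 := by
        rw [hAU, ← Matrix.trace_fin_two]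
        rw [Matrix.trace_mul_comm (U * B) V, ← mul_assoc, hVU, one_mul]
      have hdet : A.det = B 0 0 * B 1 1 := by
        have h2 : U.det * V.det = 1 := by rw [← Matrix.det_mul, hUV, Matrix.det_one]
        have h3 : A.det = B.det := by
          rw [hAU, Matrix.det_mul, Matrix.det_mul]
          calc U.det * B.det * V.det = B.det * (U.det * V.det) := by ring
          _ = B.det := by rw [h2, mul_one]
        rw [h3, Matrix.det_fin_two, h01, h10]
        ring
      refine ⟨?_, ⟨B 1 1, haJ, by linear_combination (-(B 1 1)) * htr + hdet⟩,
        ⟨B 0 0, hbJ, by linear_combination (-(B 0 0)) * htr + hdet⟩⟩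
      refine ⟨U *ᵥ ![1, 1], ?_⟩
      have hAα : A *ᵥ (U *ᵥ ![1, 1]) = U *ᵥ (B *ᵥ ![1, 1]) := by
        rw [Matrix.mulVec_mulVec, Matrix.mulVec_mulVec, hAU]
        have h7 : U * B * V * U = U * B := by
          calc U * B * V * U = U * B * (V * U) := by simp only [mul_assoc]
          _ = U * B := by rw [hVU, mul_one]
        rw [h7]
      set W : Matrix (Fin 2) (Fin 2) R := (Matrix.of ![![1, 1], ![B 0 0, B 1 1]]).transpose
        with hW
      have hPUW : (Matrix.of ![U *ᵥ ![1, 1], A *ᵥ (U *ᵥ ![1, 1])]).transpose = U * W := by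
        rw [hAα]
        ext i j
        fin_cases i <;> fin_cases j <;>
          simp [hW, Matrix.mul_apply, Matrix.mulVec, dotProduct, Fin.sum_univ_two,
            Matrix.vecHead, Matrix.vecTail, h01, h10] <;> ring
      rw [hPUW]
      have hWu : IsUnit W := by
        rw [Matrix.isUnit_iff_isUnit_det]
        have hdW : W.det = B 1 1 - B 0 0 := by
          simp [hW, Matrix.det_fin_two, Matrix.vecHead, Matrix.vecTail]
        rw [hdW]
        have h4 : IsUnit (B 0 0 - B 1 1) := by
          apply Ideal.isUnit_of_sub_one_mem_jacobson_bot
          have h5 := Ideal.sub_mem _ hbJ haJ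
          convert h5 using 1
          ring
        have h6 := h4.neg
        rwa [neg_sub] at h6
      have hUu : IsUnit U := ⟨⟨U, V, hUV, hVU⟩, rfl⟩
      exact hUu.mul hWu
    · left
      have h1 : (1 : Matrix (Fin 2) (Fin 2) R) - E = 1 := eqOneOfIso2 hF ψ
      have h2 : E = 0 := sub_eq_self.mp h1
      rw [← sub_zero A, ← h2]
      exact hmem
  · right; left
    have h1 : E = 1 := eqOneOfIso2 hE φ
    rw [h1] at hmem
    have h2 : (1 : Matrix (Fin 2) (Fin 2) R) - A = -(A - 1) := (neg_sub _ _).symm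
    rw [h2]
    exact neg_mem hmem

theorem stronglyJClean_iff_cyclic_of_comm {R : Type u} [CommRing R]
    (hR : TwoProjectiveFree R) (A : Matrix (Fin 2) (Fin 2) R) :
    IsStronglyJClean A ↔
      A ∈ (⊥ : Ideal (Matrix (Fin 2) (Fin 2) R)).jacobson ∨
      1 - A ∈ (⊥ : Ideal (Matrix (Fin 2) (Fin 2) R)).jacobson ∨
      (IsCyclicMat A ∧
        (∃ a ∈ (⊥ : Ideal R).jacobson, a ^ 2 - Matrix.trace A * a + A.det = 0) ∧
        (∃ b : R, b - 1 ∈ (⊥ : Ideal R).jacobson ∧ b ^ 2 - Matrix.trace A * b + A.det = 0)) := by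
  constructor
  · exact forwardMain hR A
  · rintro (h1 | h2 | h3)
    · exact ⟨0, by simp [IsIdempotentElem], by simpa using h1, by simp⟩
    · refine ⟨1, by simp [IsIdempotentElem], ?_, by simp⟩
      have h4 : A - 1 = -(1 - A) := (neg_sub _ _).symm
      rw [h4]
      exact neg_mem h2
    · exact converseMain A h3
end

section
/- Let R be an abelian ring (all idempotents of R are central) and let f(x) ∈ R[[x]]. If f(0) ∈ R is strongly J-clean, then f(x) ∈ R[[x]] is strongly J-clean. -/
universe u

/-- In the Jacobson radical, `x + 1` has a left inverse `z` with `1 - z` in the radical. -/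
lemma exists_left_inv_of_mem_jacobson {R : Type u} [Ring R] {x : R}
    (hx : x ∈ (⊥ : Ideal R).jacobson) :
    ∃ z : R, z * (x + 1) = 1 ∧ 1 - z ∈ (⊥ : Ideal R).jacobson := by
  obtain ⟨z, hz⟩ := Ideal.mem_jacobson_iff.1 hx 1
  rw [Ideal.mem_bot, mul_one, sub_eq_zero] at hz
  refine ⟨z, by rw [mul_add, mul_one]; exact hz, ?_⟩
  have : 1 - z = z * x := by rw [eq_sub_of_add_eq hz]
  rw [this]
  exact Ideal.mul_mem_left _ _ hx

lemma isUnit_mul_add_one_of_mem_jacobson {R : Type u} [Ring R] {x : R}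
    (hx : x ∈ (⊥ : Ideal R).jacobson) (y : R) : IsUnit (y * x + 1) := by
  have hyx : y * x ∈ (⊥ : Ideal R).jacobson := Ideal.mul_mem_left _ _ hx
  obtain ⟨z, hz1, hz2⟩ := exists_left_inv_of_mem_jacobson hyx
  -- z = 1 - (1 - z) with 1 - z ∈ J, so z itself has a left inverse
  obtain ⟨v, hv1, _⟩ := exists_left_inv_of_mem_jacobson (neg_mem hz2)
  have hvz : v * z = 1 := by rwa [neg_add_eq_sub, sub_sub_cancel] at hv1
  have hveq : v = y * x + 1 := by
    calc v = v * (z * (y * x + 1)) := by rw [hz1, mul_one]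
    _ = (v * z) * (y * x + 1) := by rw [mul_assoc]
    _ = y * x + 1 := by rw [hvz, one_mul]
  exact ⟨⟨y * x + 1, z, hveq ▸ hvz, hz1⟩, rfl⟩

theorem stronglyJClean_powerSeries_of_abelian {R : Type u} [Ring R]
    (hab : ∀ e : R, IsIdempotentElem e → ∀ r : R, e * r = r * e)
    (f : PowerSeries R) (h : IsStronglyJClean (PowerSeries.constantCoeff f)) :
    IsStronglyJClean f := by
  obtain ⟨e, he, hj, _⟩ := h
  refine ⟨PowerSeries.C e, ?_, ?_, ?_⟩
  · show _ * _ = _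
    rw [← map_mul, he]
  · rw [Ideal.mem_jacobson_iff]
    intro y
    have hu : IsUnit (y * (f - PowerSeries.C e) + 1) := by
      rw [PowerSeries.isUnit_iff_constantCoeff]
      simpa using isUnit_mul_add_one_of_mem_jacobson hj (PowerSeries.constantCoeff y)
    obtain ⟨u, hu⟩ := hu
    refine ⟨↑u⁻¹, ?_⟩
    rw [Ideal.mem_bot, sub_eq_zero, mul_assoc, ← mul_add_one (↑u⁻¹ : PowerSeries R), ← hu,
      Units.inv_mul]
  · ext n
    simp only [PowerSeries.coeff_mul_C, PowerSeries.coeff_C_mul]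
    exact (hab e he _).symm
end

section
/- Let R be a PSF ring (a commutative ring in which every finitely generated projective module is stably free). Then A(x) ∈ M₂(R[[x]]) is strongly J-clean if and only if A(0) ∈ M₂(R) is strongly J-clean. -/
universe u

/-- A commutative ring is a PSF ring if every finitely generated projective module is
stably free. -/
def IsPSFRing (R : Type u) [CommRing R] : Prop :=
  ∀ (M : Type u) [AddCommGroup M] [Module R M], Module.Projective R M → Module.Finite R M →
    ∃ m n : ℕ, Nonempty ((M × (Fin m → R)) ≃ₗ[R] (Fin n → R))


-- L4 : noncommutative, 1 + c*b unit when b in jacobson bot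
lemma aux_isUnit_one_add_mul_of_mem_jacobson {M : Type*} [Ring M] {b : M}
    (hb : b ∈ Ideal.jacobson (⊥ : Ideal M)) (c : M) : IsUnit (1 + c * b) := by
  obtain ⟨z, hz⟩ := Ideal.mem_jacobson_iff.1 hb c
  rw [Ideal.mem_bot] at hz
  have hz1 : z * (1 + c * b) = 1 := by
    have h : z * (1 + c * b) - 1 = z * c * b + z - 1 := by noncomm_ring
    rw [← sub_eq_zero, h, hz]
  obtain ⟨z', hz'⟩ := Ideal.mem_jacobson_iff.1 hb (-(z * c))
  rw [Ideal.mem_bot] at hz'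
  have hzeq : z = 1 + -(z * c) * b := by
    have h : z - (1 + -(z * c) * b) = z * c * b + z - 1 := by noncomm_ring
    rw [← sub_eq_zero, h, hz]
  have hz2 : z' * z = 1 := by
    have h : z' * z - 1 = z' * -(z * c) * b + z' - 1 := by
      nth_rewrite 1 [hzeq]; noncomm_ring
    rw [← sub_eq_zero, h, hz']
  have hz'eq : z' = 1 + c * b := by
    calc z' = z' * (z * (1 + c * b)) := by rw [hz1, mul_one]
    _ = (z' * z) * (1 + c * b) := by rw [mul_assoc]
    _ = 1 + c * b := by rw [hz2, one_mul]
  exact ⟨⟨1 + c * b, z, by rw [← hz'eq]; exact hz2, hz1⟩, rfl⟩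

-- L3 : surjective ring hom maps jacobson bot into jacobson bot
lemma aux_map_jacobson_bot {M N : Type*} [Ring M] [Ring N] (ψ : M →+* N)
    (hψ : Function.Surjective ψ) {a : M} (ha : a ∈ Ideal.jacobson (⊥ : Ideal M)) :
    ψ a ∈ Ideal.jacobson (⊥ : Ideal N) := by
  rw [Ideal.mem_jacobson_iff]
  intro y
  obtain ⟨y', rfl⟩ := hψ y
  obtain ⟨z, hz⟩ := Ideal.mem_jacobson_iff.1 ha y'
  rw [Ideal.mem_bot] at hz
  refine ⟨ψ z, ?_⟩
  rw [Ideal.mem_bot]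
  calc ψ z * ψ y' * ψ a + ψ z - 1 = ψ (z * y' * a + z - 1) := by push_cast [map_sub, map_add, map_mul, map_one]; ring_nf
  _ = 0 := by rw [hz, map_zero]

-- matrices with entries in jacobson bot are in jacobson bot
lemma aux_matrix_mem_jacobson {S : Type*} [CommRing S] {B : Matrix (Fin 2) (Fin 2) S}
    (hB : ∀ i j, B i j ∈ Ideal.jacobson (⊥ : Ideal S)) :
    B ∈ Ideal.jacobson (⊥ : Ideal (Matrix (Fin 2) (Fin 2) S)) := by
  rw [Ideal.mem_jacobson_iff]
  intro Y
  have hent : ∀ i j, (Y * B) i j ∈ Ideal.jacobson (⊥ : Ideal S) := by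
    intro i j
    rw [Matrix.mul_apply, Fin.sum_univ_two]
    exact Ideal.add_mem _ (Ideal.mul_mem_left _ _ (hB _ _)) (Ideal.mul_mem_left _ _ (hB _ _))
  have hdet : IsUnit (Matrix.det (1 + Y * B)) := by
    apply Ideal.isUnit_of_sub_one_mem_jacobson_bot
    have key : (1 + Y * B).det - 1 = (Y*B) 0 0 + ((Y*B) 1 1 +
        ((Y*B) 0 0 * (Y*B) 1 1 - (Y*B) 0 1 * (Y*B) 1 0)) := by
      simp [Matrix.det_fin_two, Matrix.add_apply, Matrix.one_apply]
      ring
    rw [key]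
    exact Ideal.add_mem _ (hent 0 0) (Ideal.add_mem _ (hent 1 1)
      (Ideal.sub_mem _ (Ideal.mul_mem_left _ _ (hent 1 1)) (Ideal.mul_mem_left _ _ (hent 1 0))))
  obtain ⟨u, hu⟩ := (Matrix.isUnit_iff_isUnit_det _).2 hdet
  set v : Matrix (Fin 2) (Fin 2) S := ↑u⁻¹ with hv
  refine ⟨v, ?_⟩
  rw [Ideal.mem_bot]
  have h1 : v * (1 + Y * B) = 1 := by rw [← hu, hv, Units.inv_mul]
  have h2 : v * Y * B + v - 1 = v * (1 + Y * B) - 1 := by noncomm_ring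
  rw [h2, h1, sub_self]

-- Cayley-Hamilton for 2x2 matrices
lemma aux_ch_fin_two {S : Type*} [CommRing S] (M : Matrix (Fin 2) (Fin 2) S) :
    M * M = (Matrix.trace M) • M - (Matrix.det M) • 1 := by
  ext i j
  simp [Matrix.mul_apply, Fin.sum_univ_two, Matrix.trace_fin_two, Matrix.det_fin_two,
    Matrix.one_apply]
  fin_cases i <;> fin_cases j <;> simp <;> ring

-- entries of jacobson-bot matrices are in jacobson bot
lemma aux_entry_mem_jacobson {S : Type*} [CommRing S] {B : Matrix (Fin 2) (Fin 2) S}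
    (hB : B ∈ Ideal.jacobson (⊥ : Ideal (Matrix (Fin 2) (Fin 2) S))) (i j : Fin 2) :
    B i j ∈ Ideal.jacobson (⊥ : Ideal S) := by
  rw [Ideal.mem_jacobson_bot]
  intro z
  have hu : IsUnit (1 + Matrix.single j i z * B) :=
    aux_isUnit_one_add_mul_of_mem_jacobson hB _
  have hdet := (Matrix.isUnit_iff_isUnit_det _).1 hu
  have : (1 + Matrix.single j i z * B).det = B i j * z + 1 := by
    rw [Matrix.det_fin_two]
    fin_cases j <;>
      simp [Matrix.single, Matrix.mul_apply, Fin.sum_univ_two, Matrix.one_apply] <;> ring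
  rwa [this] at hdet


open PowerSeries

-- power series with constant coeff in jacobson bot is in jacobson bot
lemma aux_ps_mem_jacobson {R : Type*} [CommRing R] {f : PowerSeries R}
    (hf : PowerSeries.constantCoeff (R := R) f ∈ Ideal.jacobson (⊥ : Ideal R)) :
    f ∈ Ideal.jacobson (⊥ : Ideal (PowerSeries R)) := by
  rw [Ideal.mem_jacobson_bot]
  intro g
  rw [PowerSeries.isUnit_iff_constantCoeff]
  rw [map_add, map_mul, map_one]
  exact Ideal.mem_jacobson_bot.1 hf _

lemma aux_span_X_pow_mem {R : Type*} [CommRing R] (n : ℕ) (f : PowerSeries R) :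
    f ∈ (Ideal.span {(PowerSeries.X : PowerSeries R)}) ^ n ↔
      ∀ m < n, PowerSeries.coeff (R := R) m f = 0 := by
  rw [Ideal.span_singleton_pow, Ideal.mem_span_singleton, PowerSeries.X_pow_dvd_iff]

instance aux_isAdicComplete_psX {R : Type*} [CommRing R] :
    IsAdicComplete (Ideal.span {(PowerSeries.X : PowerSeries R)}) (PowerSeries R) where
  haus' := by
    intro x hx
    ext n
    have := hx (n + 1)
    rw [SModEq.sub_mem, sub_zero, Ideal.smul_eq_mul, Ideal.mul_top] at this
    rw [aux_span_X_pow_mem] at this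
    simpa using this n (by omega)
  prec' := by
    intro f hf
    refine ⟨PowerSeries.mk fun k => PowerSeries.coeff (R := R) k (f (k + 1)), fun n => ?_⟩
    rw [SModEq.sub_mem, Ideal.smul_eq_mul, Ideal.mul_top, aux_span_X_pow_mem]
    intro m hm
    have h1 : f (m + 1) ≡ f n [SMOD ((Ideal.span {(PowerSeries.X : PowerSeries R)}) ^ (m+1) •
        ⊤ : Submodule (PowerSeries R) (PowerSeries R))] := hf (by omega)
    rw [SModEq.sub_mem, Ideal.smul_eq_mul, Ideal.mul_top, aux_span_X_pow_mem] at h1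
    have := h1 m (by omega)
    rw [map_sub] at this ⊢
    simp only [PowerSeries.coeff_mk]
    rw [sub_eq_zero] at this ⊢
    exact this.symm

lemma aux_quadratic_root {R : Type*} [CommRing R] (b c a₀ : PowerSeries R)
    (h1 : PowerSeries.constantCoeff (R := R) (a₀ ^ 2 + b * a₀ + c) = 0)
    (h2 : IsUnit (PowerSeries.constantCoeff (R := R) (2 * a₀ + b))) :
    ∃ α : PowerSeries R, α ^ 2 + b * α + c = 0 ∧
      PowerSeries.constantCoeff (R := R) α = PowerSeries.constantCoeff (R := R) a₀ := by
  set I : Ideal (PowerSeries R) := Ideal.span {(PowerSeries.X : PowerSeries R)} with hI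
  have : HenselianRing (PowerSeries R) I := inferInstance
  set f : Polynomial (PowerSeries R) :=
    Polynomial.X ^ 2 + (Polynomial.C b * Polynomial.X + Polynomial.C c) with hf
  have hmonic : f.Monic := by
    apply Polynomial.monic_X_pow_add
    have hb : (Polynomial.C b * Polynomial.X).degree ≤ 1 := by
      simpa using Polynomial.degree_C_mul_X_le b
    have hc : (Polynomial.C c).degree ≤ 0 := Polynomial.degree_C_le
    calc (Polynomial.C b * Polynomial.X + Polynomial.C c).degree
        ≤ max (Polynomial.C b * Polynomial.X).degree (Polynomial.C c).degree :=
          Polynomial.degree_add_le _ _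
      _ ≤ 1 := by simp only [max_le_iff]; exact ⟨hb, le_trans hc (by norm_num)⟩
      _ < 2 := by norm_num
  have heval : f.eval a₀ ∈ I := by
    have : f.eval a₀ = a₀ ^ 2 + b * a₀ + c := by simp [hf]; ring
    rw [this, hI, Ideal.mem_span_singleton, ← pow_one PowerSeries.X, PowerSeries.X_pow_dvd_iff]
    intro m hm
    interval_cases m
    simpa using h1
  have hderiv : IsUnit (Ideal.Quotient.mk I (f.derivative.eval a₀)) := by
    apply IsUnit.map
    have : f.derivative.eval a₀ = 2 * a₀ + b := by
      simp [hf, Polynomial.derivative_pow]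
    rw [this, PowerSeries.isUnit_iff_constantCoeff]
    exact h2
  obtain ⟨α, hroot, hsub⟩ := HenselianRing.is_henselian f hmonic a₀ heval hderiv
  refine ⟨α, ?_, ?_⟩
  · have : f.eval α = α ^ 2 + b * α + c := by simp [hf]; ring
    rw [← this]; exact hroot
  · rw [hI, Ideal.mem_span_singleton, PowerSeries.X_dvd_iff, map_sub, sub_eq_zero] at hsub
    exact hsub

theorem stronglyJClean_matrix_powerSeries_iff_of_isPSFRing {R : Type u} [CommRing R]
    (hR : IsPSFRing R) (A : Matrix (Fin 2) (Fin 2) (PowerSeries R)) :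
    IsStronglyJClean A ↔ IsStronglyJClean (A.map (PowerSeries.constantCoeff (R := R))) := by
  constructor
  · intro h
    obtain ⟨E, hE, hJ, hcomm⟩ := h
    set ψ : Matrix (Fin 2) (Fin 2) (PowerSeries R) →+* Matrix (Fin 2) (Fin 2) R :=
      (PowerSeries.constantCoeff (R := R)).mapMatrix with hψdef
    have hψsurj : Function.Surjective ψ := by
      intro B
      refine ⟨B.map (PowerSeries.C (R := R)), ?_⟩
      rw [hψdef, RingHom.mapMatrix_apply, Matrix.map_map]
      ext i j
      simp [Matrix.map_apply]
    refine ⟨E.map (PowerSeries.constantCoeff (R := R)), ?_, ?_, ?_⟩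
    · have : E.map (PowerSeries.constantCoeff (R := R)) * E.map (PowerSeries.constantCoeff (R := R))
          = (E * E).map (PowerSeries.constantCoeff (R := R)) := by
        rw [← RingHom.mapMatrix_apply, ← RingHom.mapMatrix_apply, ← map_mul, RingHom.mapMatrix_apply]
      rw [IsIdempotentElem, this, hE]
    · have := aux_map_jacobson_bot ψ hψsurj hJ
      rw [hψdef, RingHom.mapMatrix_apply] at this
      rw [show (A - E).map (PowerSeries.constantCoeff (R := R))
          = A.map (PowerSeries.constantCoeff (R := R)) - E.map (PowerSeries.constantCoeff (R := R)) from
          Matrix.map_sub _ (by simp) _ _] at this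
      exact this
    · rw [← RingHom.mapMatrix_apply, ← RingHom.mapMatrix_apply, ← map_mul, ← map_mul, hcomm]
  · intro h
    classical
    obtain ⟨E₀, hE₀, hJ₀, hcomm₀⟩ := h
    set cc := PowerSeries.constantCoeff (R := R) with hccdef
    set A₀ : Matrix (Fin 2) (Fin 2) R := A.map cc with hA₀def
    have hW : ∀ i j, (A₀ - E₀) i j ∈ Ideal.jacobson (⊥ : Ideal R) :=
      fun i j => aux_entry_mem_jacobson hJ₀ i j
    set t : R := Matrix.trace E₀ with ht
    set fd : R := Matrix.det E₀ with hfd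
    set hh : R := t - 2 * fd with hhdef
    set T₀ : R := Matrix.trace A₀ with hT₀
    set D₀ : R := Matrix.det A₀ with hD₀
    set s : R := Matrix.trace (A₀ * (1 - E₀)) with hs
    -- Cayley-Hamilton for E₀
    have CH0 := aux_ch_fin_two E₀
    rw [hE₀, ← ht, ← hfd] at CH0
    have R1 : t • E₀ - E₀ = fd • (1 : Matrix (Fin 2) (Fin 2) R) := by
      calc t • E₀ - E₀ = t • E₀ - (t • E₀ - fd • 1) := by rw [← CH0]
      _ = fd • 1 := by module
    have R2 : fd • E₀ = fd • (1 : Matrix (Fin 2) (Fin 2) R) := by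
      have h2 : (t • E₀ - E₀) * E₀ = (fd • (1 : Matrix (Fin 2) (Fin 2) R)) * E₀ := by rw [R1]
      rw [Matrix.sub_mul, smul_mul_assoc, hE₀, smul_mul_assoc, one_mul] at h2
      rw [R1] at h2
      exact h2.symm
    have hTr2 : Matrix.trace (1 : Matrix (Fin 2) (Fin 2) R) = 2 := by
      simp [Matrix.trace_one]
    have R3 : fd * t = 2 * fd := by
      have h3 := congrArg Matrix.trace R2
      rw [Matrix.trace_smul, Matrix.trace_smul, ← ht, hTr2, smul_eq_mul, smul_eq_mul] at h3
      linear_combination h3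
    have R4 : t * t - t = 2 * fd := by
      have h4 := congrArg Matrix.trace R1
      rw [Matrix.trace_sub, Matrix.trace_smul, Matrix.trace_smul, ← ht, hTr2, smul_eq_mul,
        smul_eq_mul] at h4
      linear_combination h4
    have R0 : fd * fd = fd := by
      have h5 := congrArg Matrix.det hE₀
      rw [Matrix.det_mul, ← hfd] at h5
      exact h5
    have hhh : hh * hh = hh := by rw [hhdef]; linear_combination R4 - 4*R3 + 4*R0
    have hht1 : hh * (t - 1) = 0 := by rw [hhdef]; linear_combination R4 - 2*R3
    have hfh : fd * hh = 0 := by rw [hhdef]; linear_combination R3 - 2*R0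
    have hhg : hh * (1 - t + fd) = 0 := by rw [hhdef]; linear_combination -R4 + 3*R3 - 2*R0
    have R6 : (1 - hh) • E₀ = fd • (1 : Matrix (Fin 2) (Fin 2) R) := by
      have e1 : (2*fd) • E₀ = (2*fd) • (1 : Matrix (Fin 2) (Fin 2) R) := by
        rw [mul_smul, mul_smul, R2]
      calc (1-hh) • E₀ = (2*fd) • E₀ - (t • E₀ - E₀) := by rw [hhdef]; module
      _ = (2*fd) • (1 : Matrix (Fin 2) (Fin 2) R) - fd • (1 : Matrix (Fin 2) (Fin 2) R) := by
          rw [e1, R1]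
      _ = fd • (1 : Matrix (Fin 2) (Fin 2) R) := by module
    -- commuting facts
    have hc : A₀ * E₀ = E₀ * A₀ := hcomm₀
    have hc' : A₀ * (1 - E₀) = (1 - E₀) * A₀ := by
      rw [Matrix.mul_sub, Matrix.sub_mul, mul_one, one_mul, hc]
    have hE₀' : (1 - E₀) * (1 - E₀) = (1 - E₀) := by
      have h6 : (1 - E₀) * (1 - E₀) - (1 - E₀) = E₀*E₀ - E₀ := by noncomm_ring
      rw [hE₀, sub_self] at h6
      exact sub_eq_zero.1 h6
    have hdet1sub : Matrix.det ((1 : Matrix (Fin 2) (Fin 2) R) - E₀) = 1 - t + fd := by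
      rw [ht, hfd]
      simp [Matrix.det_fin_two, Matrix.trace_fin_two, Matrix.sub_apply, Matrix.one_apply]
      ring
    have hNN : (A₀*(1-E₀))*(A₀*(1-E₀)) = (A₀*A₀)*(1-E₀) := by
      rw [mul_assoc A₀ (1-E₀) (A₀*(1-E₀)), ← mul_assoc (1-E₀) A₀ (1-E₀), ← hc',
        mul_assoc A₀ (1-E₀) (1-E₀), hE₀', ← mul_assoc]
    have e2 := aux_ch_fin_two (A₀*(1-E₀))
    rw [← hs, Matrix.det_mul, hdet1sub, ← hD₀, hNN] at e2
    have e3 := aux_ch_fin_two A₀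
    rw [← hT₀, ← hD₀] at e3
    rw [e3, Matrix.sub_mul, smul_mul_assoc, smul_mul_assoc, one_mul] at e2
    have Rtr : T₀ * s - D₀*(2-t) = s*s - (D₀*(1-t+fd))*2 := by
      have e4 := congrArg Matrix.trace e2
      simp only [Matrix.trace_sub, Matrix.trace_smul, smul_eq_mul] at e4
      rw [hTr2, ← hs, ← ht] at e4
      linear_combination e4
    have R7 : hh*(s*s) - hh*(T₀*s) + hh*D₀ = 0 := by
      linear_combination (-hh)*Rtr + D₀*hht1 + 2*D₀*hhg
    -- move to power series level
    set TA : PowerSeries R := Matrix.trace A with hTA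
    set DA : PowerSeries R := Matrix.det A with hDA
    have ccTA : cc TA = T₀ := by
      rw [hTA, hT₀, hA₀def]
      simp [Matrix.trace_fin_two, Matrix.map_apply, map_add]
    have ccDA : cc DA = D₀ := by
      rw [hDA, hD₀, hA₀def]
      simp [Matrix.det_fin_two, Matrix.map_apply, map_sub, map_mul]
    set hK : PowerSeries R := PowerSeries.C (R := R) hh with hhK
    set fK : PowerSeries R := PowerSeries.C (R := R) fd with hfK
    have ccC : ∀ x : R, cc (PowerSeries.C (R := R) x) = x := fun x => PowerSeries.constantCoeff_C x
    -- memberships in J(R)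
    have hsJ : s ∈ Ideal.jacobson (⊥ : Ideal R) := by
      have hzero : E₀*(1-E₀) = 0 := by rw [Matrix.mul_sub, mul_one, hE₀, sub_self]
      have e6 : A₀*(1-E₀) = (A₀-E₀)*(1-E₀) := by rw [Matrix.sub_mul, hzero, sub_zero]
      have ent : ∀ i j k, (A₀-E₀) i k * ((1 - E₀ : Matrix (Fin 2) (Fin 2) R)) k j
          ∈ Ideal.jacobson (⊥ : Ideal R) := fun i j k => Ideal.mul_mem_right _ _ (hW _ _)
      rw [hs, e6, Matrix.trace_fin_two, Matrix.mul_apply, Matrix.mul_apply, Fin.sum_univ_two,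
        Fin.sum_univ_two]
      exact add_mem (add_mem (ent 0 0 0) (ent 0 0 1)) (add_mem (ent 1 1 0) (ent 1 1 1))
    have hT1J : hh*(T₀ - 1) ∈ Ideal.jacobson (⊥ : Ideal R) := by
      have e8 : T₀ - t = Matrix.trace (A₀ - E₀) := by rw [Matrix.trace_sub, ht, hT₀]
      have e9 : hh*(T₀-1) = hh*(t-1) + hh*(T₀ - t) := by ring
      rw [e9, hht1, zero_add, e8, Matrix.trace_fin_two]
      exact Ideal.mul_mem_left _ _ (add_mem (hW 0 0) (hW 1 1))
    have hmem : hh*(T₀-1) - 2*(hh*s) ∈ Ideal.jacobson (⊥ : Ideal R) :=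
      sub_mem hT1J (Ideal.mul_mem_left _ _ (Ideal.mul_mem_left _ _ hsJ))
    -- find the root α
    have cond1 : cc ((PowerSeries.C (R := R) (hh*s)) ^ 2 + (-(hK*TA + 1 - hK)) * (PowerSeries.C (R := R) (hh*s))
        + hK*DA) = 0 := by
      simp only [map_add, map_pow, map_mul, map_neg, map_sub, map_one]
      rw [hhK, ccC, ccC, ccTA, ccDA]
      linear_combination R7 + (s*s - T₀*s + s)*hhh
    have cond2 : IsUnit (cc (2 * (PowerSeries.C (R := R) (hh*s)) + -(hK*TA + 1 - hK))) := by
      simp only [map_add, map_neg, map_sub, map_mul, map_one, map_ofNat]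
      rw [hhK, ccC, ccC, ccTA]
      have hyy : IsUnit (-(2 * (hh*s) + -(hh * T₀ + 1 - hh))) := by
        apply Ideal.isUnit_of_sub_one_mem_jacobson_bot
        rw [show -(2 * (hh*s) + -(hh * T₀ + 1 - hh)) - 1 = hh*(T₀-1) - 2*(hh*s) from by ring]
        exact hmem
      have hyy2 := hyy.neg
      rwa [neg_neg] at hyy2
    obtain ⟨α, hαroot, hαcc⟩ := aux_quadratic_root (-(hK*TA + 1 - hK)) (hK*DA)
        (PowerSeries.C (R := R) (hh*s)) cond1 cond2
    rw [ccC] at hαcc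
    have hroot : α^2 - (hK*TA + 1 - hK)*α + hK*DA = 0 := by linear_combination hαroot
    have hK2 : hK*hK = hK := by rw [hhK, ← map_mul, hhh]
    have hfKhK : fK*hK = 0 := by rw [hfK, hhK, ← map_mul, hfh, map_zero]
    have hfK2 : fK*fK = fK := by rw [hfK, ← map_mul, R0]
    -- (1 - hK) * α = 0
    have hγ2 : ((1-hK)*α)*((1-hK)*α) = (1-hK)*α := by
      linear_combination (1-hK)^2*hroot + ((hK-1)*TA*α - (hK-1)*DA + (2-hK)*α)*hK2
    have hγcc : cc ((1-hK)*α) = 0 := by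
      rw [map_mul, map_sub, map_one, hhK, ccC, hαcc]
      linear_combination (-s)*hhh
    have hγJ : (1-hK)*α ∈ Ideal.jacobson (⊥ : Ideal (PowerSeries R)) :=
      aux_ps_mem_jacobson (by rw [hγcc]; exact Submodule.zero_mem _)
    have hunit1 : IsUnit (1 - (1-hK)*α) := by
      have h7 := Ideal.mem_jacobson_bot.1 hγJ (-1)
      rwa [show (1-hK)*α*(-1)+1 = 1 - (1-hK)*α from by ring] at h7
    obtain ⟨U1, hU1⟩ := hunit1
    have hγ0 : (1-hK)*α = 0 := by
      have h8 : ((1-hK)*α) * (1 - (1-hK)*α) = 0 := by linear_combination -hγ2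
      calc (1-hK)*α = ((1-hK)*α) * ((1 - (1-hK)*α) * ↑U1⁻¹) := by
            rw [← hU1, Units.mul_inv, mul_one]
      _ = (((1-hK)*α) * (1 - (1-hK)*α)) * ↑U1⁻¹ := by ring
      _ = 0 := by rw [h8, zero_mul]
    have hKα : hK*α = α := by linear_combination -hγ0
    -- the unit u and w
    have hccu : cc (hK*(TA - 2*α) + (1 - hK)) = hh*T₀ - 2*(hh*(hh*s)) + (1 - hh) := by
      simp only [map_add, map_mul, map_sub, map_one, map_ofNat, hhK, ccC, ccTA, hαcc]
      rw [hαcc]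
      ring
    have huu : IsUnit (hK*(TA - 2*α) + (1 - hK)) := by
      rw [PowerSeries.isUnit_iff_constantCoeff, hccu]
      apply Ideal.isUnit_of_sub_one_mem_jacobson_bot
      rw [show hh*T₀ - 2*(hh*(hh*s)) + (1 - hh) - 1 = (hh*(T₀-1) - 2*(hh*s)) + (-2*s)*(hh*hh - hh)
        from by ring, hhh, sub_self, mul_zero, add_zero]
      exact hmem
    obtain ⟨U, hU⟩ := huu
    have h1 : (↑U⁻¹ : PowerSeries R) * (hK*(TA - 2*α) + (1 - hK)) = 1 := by
      rw [← hU, Units.inv_mul]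
    set w : PowerSeries R := hK * ↑U⁻¹ with hw
    have hKw : hK*w = w := by rw [hw, ← mul_assoc, hK2]
    have hfw : fK*w = 0 := by rw [hw, ← mul_assoc, hfKhK, zero_mul]
    have hwT : w*(TA - 2*α) = hK := by
      rw [hw]
      linear_combination hK*h1 + ((↑U⁻¹ : PowerSeries R)*(1 - TA + 2*α))*hK2
    have P3 : hK*(α*α) - hK*TA*α + hK*DA = 0 := by
      linear_combination hK*hroot + (TA*α - DA - α)*hK2
    have D1 : w*(α*α) - w*TA*α + w*DA = 0 := by
      linear_combination w*P3 - (α*α - TA*α + DA)*hKw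
    have D2 : w*TA*α - 2*(w*(α*α)) - α = 0 := by linear_combination α*hwT + hKα
    have P8 : w*(α*α) - w*DA + α = 0 := by linear_combination -D1 - D2
    have c1 : (fK - w*α)*w + w*(fK - w*α) + w*w*TA = w := by
      linear_combination 2*hfw + w*hwT + hKw
    have c2 : (fK - w*α)*(fK - w*α) - w*w*DA = fK - w*α := by
      linear_combination hfK2 + (-2*α)*hfw + w*P8
    -- the idempotent lift
    set EK : Matrix (Fin 2) (Fin 2) (PowerSeries R) :=
      (fK - w*α) • (1 : Matrix (Fin 2) (Fin 2) (PowerSeries R)) + w • A with hEK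
    have hCHA := aux_ch_fin_two A
    rw [← hTA, ← hDA] at hCHA
    have hidem : EK * EK = EK := by
      rw [hEK]
      rw [Matrix.add_mul, Matrix.mul_add, Matrix.mul_add]
      simp only [smul_mul_assoc, mul_smul_comm, one_mul, mul_one, smul_smul]
      rw [hCHA]
      rw [smul_sub, smul_smul, smul_smul]
      calc _ = ((fK - w*α)*(fK - w*α) - w*w*DA) • (1 : Matrix (Fin 2) (Fin 2) (PowerSeries R))
            + ((fK - w*α)*w + w*(fK - w*α) + w*w*TA) • A := by
              rw [sub_smul, add_smul, add_smul]; abel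
        _ = _ := by rw [c1, c2]
    have hcommE : A * EK = EK * A := by
      rw [hEK, Matrix.mul_add, Matrix.add_mul]
      simp only [mul_smul_comm, smul_mul_assoc, mul_one, one_mul]
    refine ⟨EK, hidem, ?_, hcommE⟩
    apply aux_matrix_mem_jacobson
    intro i j
    apply aux_ps_mem_jacobson
    -- compute the constant coefficient of the (i,j) entry
    set v : R := cc (↑U⁻¹ : PowerSeries R) with hv
    have hccw : cc w = hh * v := by rw [hw, map_mul, hhK, ccC, hv]
    have hvu : v * (hh*T₀ - 2*(hh*(hh*s)) + (1 - hh)) = 1 := by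
      rw [← hccu, hv, ← map_mul, h1, map_one]
    have hhvJ : hh - hh*v ∈ Ideal.jacobson (⊥ : Ideal R) := by
      have e7 : hh - hh*v = (hh*v)*(hh*(T₀-1) - 2*(hh*s)) := by
        linear_combination (-hh)*hvu + (-2*v*s*hh)*hhh
      rw [e7]
      exact Ideal.mul_mem_left _ _ hmem
    have hδ : (1-hh)*(E₀ i j) = fd*((1 : Matrix (Fin 2) (Fin 2) R) i j) := by
      have := congrFun (congrFun R6 i) j
      simpa [Matrix.smul_apply, smul_eq_mul] using this
    have hone : cc ((1 : Matrix (Fin 2) (Fin 2) (PowerSeries R)) i j)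
        = (1 : Matrix (Fin 2) (Fin 2) R) i j := by
      by_cases hij : i = j <;> simp [Matrix.one_apply, hij]
    have hccA : ∀ i j, cc (A i j) = A₀ i j := by intro i j; rw [hA₀def]; simp [Matrix.map_apply]
    have hccE : cc ((A - EK) i j) = (1 - hh*v)*((A₀-E₀) i j) + (hh - hh*v)*(E₀ i j)
        + ((hh*v)*(hh*s))*((1 : Matrix (Fin 2) (Fin 2) R) i j) := by
      rw [hEK]
      simp only [Matrix.sub_apply, Matrix.add_apply, Matrix.smul_apply, smul_eq_mul,
        map_sub, map_add, map_mul]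
      rw [hccw, hfK, ccC, hαcc, hccA, hone]
      linear_combination hδ
    rw [hccE]
    refine add_mem (add_mem ?_ ?_) ?_
    · exact Ideal.mul_mem_left _ _ (hW i j)
    · exact Ideal.mul_mem_right _ _ hhvJ
    · exact Ideal.mul_mem_right _ _ (Ideal.mul_mem_left _ _ (Ideal.mul_mem_left _ _ hsJ))
end
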